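/- arXiv:2108.07617 — 5 statements merged into one kernel-verified Lean document; each statement's English description precedes it below -/
import Mathlib

section
/- Let m ≥ 3 with m ≢ 0 (mod 4). Then for every N ∈ ℤ_2 there exists x ∈ ℤ_2 with ((m-2)/2)(x^2 - x) + x = N, where division by 2 is interpreted via the integrality of (m-2)(x^2-x)/2. Equivalently, the quadratic equation (m-2)x^2 - (m-4)x - 2N = 0 has a solution in ℤ_2. -/
open Polynomial

lemma padic_two_cast : (((2 : ℕ)) : ℤ_[2]) = 2 := by norm_cast

lemma toZMod_two : PadicInt.toZMod (2 : ℤ_[2]) = 0 := by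
  rw [← padic_two_cast, map_natCast]
  decide

lemma two_dvd_of_toZMod_eq_zero (y : ℤ_[2]) (h : PadicInt.toZMod y = 0) :
    (2 : ℤ_[2]) ∣ y := by
  have hy : y ∈ RingHom.ker (PadicInt.toZMod : ℤ_[2] →+* ZMod 2) := h
  rw [PadicInt.ker_toZMod, PadicInt.maximalIdeal_eq_span_p, Ideal.mem_span_singleton,
    padic_two_cast] at hy
  exact hy

lemma norm_le_half_of_two_dvd (y : ℤ_[2]) (h : (2 : ℤ_[2]) ∣ y) : ‖y‖ ≤ 2⁻¹ := by
  obtain ⟨c, rfl⟩ := h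
  have h2 : ‖(2 : ℤ_[2])‖ = 2⁻¹ := by
    rw [← padic_two_cast, PadicInt.norm_p]
    norm_num
  calc ‖(2 : ℤ_[2]) * c‖ = ‖(2 : ℤ_[2])‖ * ‖c‖ := norm_mul _ _
    _ ≤ 2⁻¹ * 1 := by rw [h2]; gcongr; exact PadicInt.norm_le_one c
    _ = 2⁻¹ := by ring

lemma norm_eq_one_of_toZMod_ne_zero (y : ℤ_[2]) (h : PadicInt.toZMod y ≠ 0) : ‖y‖ = 1 := by
  refine le_antisymm (PadicInt.norm_le_one y) ?_
  by_contra hlt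
  push_neg at hlt
  have h2 : (2 : ℤ_[2]) ∣ y := by
    have := (PadicInt.norm_lt_one_iff_dvd y).mp hlt
    rwa [padic_two_cast] at this
  obtain ⟨c, rfl⟩ := h2
  rw [map_mul, toZMod_two, zero_mul] at h
  exact h rfl

lemma two_dvd_sq_sub (x : ℤ_[2]) : (2 : ℤ_[2]) ∣ x ^ 2 - x := by
  apply two_dvd_of_toZMod_eq_zero
  rw [map_sub, map_pow]
  generalize (PadicInt.toZMod x) = t
  revert t
  decide

/-- If `m ≥ 3` and `m ≢ 0 (mod 4)`, then for every `N ∈ ℤ_2` there is `x ∈ ℤ_2` with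
`((m-2)/2)(x² - x) + x = N`, stated equivalently as `(m-2)x² - (m-4)x - 2N = 0`. -/
theorem stmt_4 (m : ℤ) (hm : 3 ≤ m) (h4 : ¬ (4 ∣ m)) (N : ℤ_[2]) :
    ∃ x : ℤ_[2], ((m : ℤ_[2]) - 2) * x ^ 2 - ((m : ℤ_[2]) - 4) * x - 2 * N = 0 := by
  rcases Int.even_or_odd m with hev | hodd
  · -- m even, so m = j + j with j odd
    obtain ⟨j, rfl⟩ := hev
    have hjodd : Odd j := by
      rcases Int.even_or_odd j with ⟨k, rfl⟩ | h
      · exfalso; exact h4 ⟨k, by ring⟩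
      · exact h
    set G : Polynomial ℤ_[2] :=
      C ((j : ℤ_[2]) - 1) * X ^ 2 - C ((j : ℤ_[2]) - 2) * X - C N with hG
    have hevalN : G.eval N = ((j : ℤ_[2]) - 1) * (N ^ 2 - N) := by
      first
      | (simp [hG]; ring)
      | simp [hG]
    have hderivN : G.derivative.eval N = ((j : ℤ_[2]) - 1) * (2 * N) - ((j : ℤ_[2]) - 2) := by
      first
      | (simp [hG]; norm_num)
      | simp [hG]
    have hj1 : (2 : ℤ_[2]) ∣ ((j : ℤ_[2]) - 1) := by
      obtain ⟨k, hk⟩ := hjodd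
      subst hk
      exact ⟨(k : ℤ_[2]), by push_cast; ring⟩
    have hderiv_norm : ‖G.derivative.eval N‖ = 1 := by
      rw [hderivN]
      apply norm_eq_one_of_toZMod_ne_zero
      have h1 : PadicInt.toZMod ((j : ℤ_[2]) - 1) = 0 := by
        obtain ⟨c, hc⟩ := hj1
        rw [hc, map_mul, toZMod_two, zero_mul]
      rw [map_sub, map_mul, h1, zero_mul, zero_sub, neg_ne_zero]
      have h2 : PadicInt.toZMod ((j : ℤ_[2]) - 2) = ((j - 2 : ℤ) : ZMod 2) := by
        rw [show ((j : ℤ_[2]) - 2) = ((j - 2 : ℤ) : ℤ_[2]) by push_cast; ring, map_intCast]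
      rw [h2, Ne, ZMod.intCast_zmod_eq_zero_iff_dvd]
      obtain ⟨k, hk⟩ := hjodd
      omega
    have heval_norm : ‖G.eval N‖ ≤ 4⁻¹ := by
      rw [hevalN, norm_mul]
      have h1 := norm_le_half_of_two_dvd _ hj1
      have h2 := norm_le_half_of_two_dvd _ (two_dvd_sq_sub N)
      calc ‖(j : ℤ_[2]) - 1‖ * ‖N ^ 2 - N‖ ≤ 2⁻¹ * 2⁻¹ := by
            apply mul_le_mul h1 h2 (norm_nonneg _)
            norm_num
        _ = 4⁻¹ := by norm_num
    have hnorm : ‖G.eval N‖ < ‖G.derivative.eval N‖ ^ 2 := by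
      rw [hderiv_norm]
      calc ‖G.eval N‖ ≤ 4⁻¹ := heval_norm
        _ < 1 ^ 2 := by norm_num
    obtain ⟨z, hz, -⟩ := hensels_lemma hnorm
    refine ⟨z, ?_⟩
    have hzeval : ((j : ℤ_[2]) - 1) * z ^ 2 - ((j : ℤ_[2]) - 2) * z - N = 0 := by
      simpa [hG] using hz
    have hcast : (((j + j : ℤ)) : ℤ_[2]) = 2 * (j : ℤ_[2]) := by push_cast; ring
    rw [hcast]
    calc (2 * (j : ℤ_[2]) - 2) * z ^ 2 - (2 * (j : ℤ_[2]) - 4) * z - 2 * N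
        = 2 * (((j : ℤ_[2]) - 1) * z ^ 2 - ((j : ℤ_[2]) - 2) * z - N) := by ring
      _ = 0 := by rw [hzeval, mul_zero]
  · -- m odd
    set F : Polynomial ℤ_[2] :=
      C ((m : ℤ_[2]) - 2) * X ^ 2 - C ((m : ℤ_[2]) - 4) * X - C (2 * N) with hF
    have heval0 : F.eval 0 = -(2 * N) := by simp [hF]
    have hderiv0 : F.derivative.eval 0 = -((m : ℤ_[2]) - 4) := by simp [hF]
    have hderiv_norm : ‖F.derivative.eval 0‖ = 1 := by
      rw [hderiv0, norm_neg]
      have hc : (m : ℤ_[2]) - 4 = ((m - 4 : ℤ) : ℤ_[2]) := by push_cast; ring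
      rw [hc]
      apply norm_eq_one_of_toZMod_ne_zero
      rw [map_intCast, Ne, ZMod.intCast_zmod_eq_zero_iff_dvd]
      obtain ⟨k, hk⟩ := hodd
      omega
    have hnorm : ‖F.eval 0‖ < ‖F.derivative.eval 0‖ ^ 2 := by
      rw [hderiv_norm, heval0, norm_neg]
      have := norm_le_half_of_two_dvd (2 * N) ⟨N, rfl⟩
      calc ‖(2 : ℤ_[2]) * N‖ ≤ 2⁻¹ := this
        _ < 1 ^ 2 := by norm_num
    obtain ⟨z, hz, -⟩ := hensels_lemma hnorm
    refine ⟨z, ?_⟩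
    simpa [hF] using hz
end

section
/- Let p be an odd prime and a_1,…,a_n positive integers such that at least five of the a_i (counted with multiplicity) are p-adic units. Then for all A, B, k ∈ ℤ_p, the equation (B + k(m-2) - Σ_{i=2}^n a_i x_i)^2 + Σ_{i=2}^n a_1 a_i x_i^2 = (2A + B + k(m-4)) a_1 has a primitive solution (x_2,…,x_n) ∈ ℤ_p^{n-1}, i.e., a solution with min_i ord_p(x_i) = 0. -/
open Finset Classical Polynomial

open scoped Classical

variable {p : ℕ} [Fact p.Prime]

lemma two_ne' (hp : p ≠ 2) : (2 : ZMod p) ≠ 0 := by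
  have : ((2 : ℕ) : ZMod p) ≠ 0 := by
    rw [Ne, ZMod.natCast_eq_zero_iff]
    intro h
    exact hp ((Nat.prime_dvd_prime_iff_eq (Fact.out) Nat.prime_two).mp h)
  simpa using this

lemma two_sq (hp : p ≠ 2) (α β : ZMod p) (hα : α ≠ 0) (hβ : β ≠ 0) (t : ZMod p) :
    ∃ g h : ZMod p, α * g ^ 2 + β * h ^ 2 = t := by
  have hcard : Fintype.card (ZMod p) % 2 = 1 := by
    rw [ZMod.card]
    exact Nat.odd_iff.mp ((Fact.out : p.Prime).odd_of_ne_two hp)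
  have hf2 : degree (C α * X ^ 2 + C 0 * X + C (-t)) = 2 := degree_quadratic hα
  have hg2 : degree (C β * X ^ 2 + C 0 * X + C 0) = 2 := degree_quadratic hβ
  obtain ⟨a, b, hab⟩ := FiniteField.exists_root_sum_quadratic hf2 hg2 hcard
  refine ⟨a, b, ?_⟩
  simp only [eval_add, eval_mul, eval_pow, eval_C, eval_X, zero_mul, add_zero] at hab
  linear_combination hab

lemma affine_bin (hp : p ≠ 2) (A B C2 L1 L2 K t : ZMod p) (hA : A ≠ 0)
    (hM : 4 * A * C2 - B ^ 2 ≠ 0) :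
    ∃ y1 y2 : ZMod p,
      A * y1 ^ 2 + B * y1 * y2 + C2 * y2 ^ 2 + L1 * y1 + L2 * y2 + K = t := by
  have h2 : (2 : ZMod p) ≠ 0 := two_ne' hp
  have h4 : (4 : ZMod p) ≠ 0 := by
    have : (4 : ZMod p) = 2 * 2 := by norm_num
    rw [this]; exact mul_ne_zero h2 h2
  have h16 : (16 : ZMod p) ≠ 0 := by
    have : (16 : ZMod p) = 4 * 4 := by norm_num
    rw [this]; exact mul_ne_zero h4 h4
  obtain ⟨G, H, hGH⟩ := two_sq hp (4 * (4 * A * C2 - B ^ 2)) 1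
    (mul_ne_zero h4 hM) one_ne_zero
    (16 * A * (4 * A * C2 - B ^ 2) * t
      - 4 * (4 * A * C2 - B ^ 2) * (4 * A * K - L1 ^ 2) + (4 * A * L2 - 2 * B * L1) ^ 2)
  set y2 : ZMod p := (2 * (4 * A * C2 - B ^ 2))⁻¹ * (H - (4 * A * L2 - 2 * B * L1)) with hy2
  set y1 : ZMod p := (2 * A)⁻¹ * (G - B * y2 - L1) with hy1
  have e1 : 2 * A * y1 = G - B * y2 - L1 := by
    rw [hy1, mul_inv_cancel_left₀ (mul_ne_zero h2 hA)]
  have e2 : 2 * (4 * A * C2 - B ^ 2) * y2 = H - (4 * A * L2 - 2 * B * L1) := by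
    rw [hy2, mul_inv_cancel_left₀ (mul_ne_zero h2 hM)]
  refine ⟨y1, y2, ?_⟩
  have key : (16 * A * (4 * A * C2 - B ^ 2)) *
      (A * y1 ^ 2 + B * y1 * y2 + C2 * y2 ^ 2 + L1 * y1 + L2 * y2 + K)
      = (16 * A * (4 * A * C2 - B ^ 2)) * t := by
    linear_combination (4 * (4 * A * C2 - B ^ 2) * (2 * A * y1 + B * y2 + L1 + G)) * e1
      + (2 * (4 * A * C2 - B ^ 2) * y2 + (4 * A * L2 - 2 * B * L1) + H) * e2 + hGH
  exact mul_left_cancel₀ (mul_ne_zero (mul_ne_zero h16 hA) hM) key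

lemma core_lin (hp : p ≠ 2) (w v1 v2 v3 C D t : ZMod p) (hv1 : v1 ≠ 0) (hv2 : v2 ≠ 0)
    (h : w + v1 = 0) :
    ∃ y1 y2 y3 : ZMod p,
      w * (D - (v1 * y1 ^ 2 + v2 * y2 ^ 2 + v3 * y3 ^ 2))
        - (C - (v1 * y1 + v2 * y2 + v3 * y3)) ^ 2 = t := by
  have h2 : (2 : ZMod p) ≠ 0 := two_ne' hp
  set c : ZMod p := if C = 0 then 1 else 0 with hc
  have hC' : C - v2 * c ≠ 0 := by
    by_cases hC : C = 0
    · rw [hc, if_pos hC, hC, mul_one, zero_sub]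
      exact neg_ne_zero.mpr hv2
    · rwa [hc, if_neg hC, mul_zero, sub_zero]
  have hslope : 2 * (C - v2 * c) * v1 ≠ 0 := mul_ne_zero (mul_ne_zero h2 hC') hv1
  set y1 : ZMod p := (2 * (C - v2 * c) * v1)⁻¹
      * (t - (w * D - w * v2 * c ^ 2 - (C - v2 * c) ^ 2)) with hy1
  have e1 : 2 * (C - v2 * c) * v1 * y1
      = t - (w * D - w * v2 * c ^ 2 - (C - v2 * c) ^ 2) := by
    rw [hy1, mul_inv_cancel_left₀ hslope]
  exact ⟨y1, c, 0, by linear_combination e1 - v1 * y1 ^ 2 * h⟩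

lemma core_special (hp : p ≠ 2) (w v C D t : ZMod p) (hv : v ≠ 0) (hw : w = -(2 * v)) :
    ∃ y1 y2 y3 : ZMod p,
      w * (D - (v * y1 ^ 2 + v * y2 ^ 2 + v * y3 ^ 2))
        - (C - (v * y1 + v * y2 + v * y3)) ^ 2 = t := by
  have h2 : (2 : ZMod p) ≠ 0 := two_ne' hp
  have h4 : (4 : ZMod p) ≠ 0 := by
    have : (4 : ZMod p) = 2 * 2 := by norm_num
    rw [this]; exact mul_ne_zero h2 h2
  set l : ZMod p := if C = 0 then 1 else 0 with hl
  have hC' : C - v * l ≠ 0 := by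
    by_cases hC : C = 0
    · rw [hl, if_pos hC, hC, mul_one, zero_sub]
      exact neg_ne_zero.mpr hv
    · rwa [hl, if_neg hC, mul_zero, sub_zero]
  have hslope : 4 * (C - v * l) * v ≠ 0 := mul_ne_zero (mul_ne_zero h4 hC') hv
  set z : ZMod p := (4 * (C - v * l) * v)⁻¹
      * (t - (-(2 * v) * D + 2 * v ^ 2 * l ^ 2 - (C - v * l) ^ 2)) with hz
  have e1 : 4 * (C - v * l) * v * z
      = t - (-(2 * v) * D + 2 * v ^ 2 * l ^ 2 - (C - v * l) ^ 2) := by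
    rw [hz, mul_inv_cancel_left₀ hslope]
  exact ⟨z, z, l, by linear_combination e1 + (D - v * l ^ 2 - 2 * v * z ^ 2) * hw⟩

lemma core_bin (hp : p ≠ 2) (w v1 v2 v3 C D t : ZMod p) (hw : w ≠ 0) (hv1 : v1 ≠ 0)
    (hv2 : v2 ≠ 0) (hA : w + v1 ≠ 0) (hM : w + v1 + v2 ≠ 0) :
    ∃ y1 y2 y3 : ZMod p,
      w * (D - (v1 * y1 ^ 2 + v2 * y2 ^ 2 + v3 * y3 ^ 2))
        - (C - (v1 * y1 + v2 * y2 + v3 * y3)) ^ 2 = t := by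
  have h4 : (4 : ZMod p) ≠ 0 := by
    have h2 : (2 : ZMod p) ≠ 0 := two_ne' hp
    have : (4 : ZMod p) = 2 * 2 := by norm_num
    rw [this]; exact mul_ne_zero h2 h2
  have hA' : -(v1 * (w + v1)) ≠ 0 := neg_ne_zero.mpr (mul_ne_zero hv1 hA)
  have hM' : 4 * -(v1 * (w + v1)) * -(v2 * (w + v2)) - (-(2 * v1 * v2)) ^ 2 ≠ 0 := by
    have e : 4 * -(v1 * (w + v1)) * -(v2 * (w + v2)) - (-(2 * v1 * v2)) ^ 2
        = 4 * v1 * v2 * w * (w + v1 + v2) := by ring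
    rw [e]
    exact mul_ne_zero (mul_ne_zero (mul_ne_zero (mul_ne_zero h4 hv1) hv2) hw) hM
  obtain ⟨y1, y2, hy⟩ := affine_bin hp (-(v1 * (w + v1))) (-(2 * v1 * v2)) (-(v2 * (w + v2)))
    (2 * C * v1) (2 * C * v2) (w * D - C ^ 2) t hA' hM'
  exact ⟨y1, y2, 0, by linear_combination hy⟩

lemma core (hp : p ≠ 2) (w v1 v2 v3 C D t : ZMod p) (hw : w ≠ 0) (hv1 : v1 ≠ 0)
    (hv2 : v2 ≠ 0) (hv3 : v3 ≠ 0) :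
    ∃ y1 y2 y3 : ZMod p,
      w * (D - (v1 * y1 ^ 2 + v2 * y2 ^ 2 + v3 * y3 ^ 2))
        - (C - (v1 * y1 + v2 * y2 + v3 * y3)) ^ 2 = t := by
  by_cases h1 : w + v1 = 0
  · exact core_lin hp w v1 v2 v3 C D t hv1 hv2 h1
  by_cases h2 : w + v2 = 0
  · obtain ⟨y1, y2, y3, hy⟩ := core_lin hp w v2 v1 v3 C D t hv2 hv1 h2
    exact ⟨y2, y1, y3, by linear_combination hy⟩
  by_cases h3 : w + v3 = 0
  · obtain ⟨y1, y2, y3, hy⟩ := core_lin hp w v3 v1 v2 C D t hv3 hv1 h3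
    exact ⟨y2, y3, y1, by linear_combination hy⟩
  by_cases h12 : w + v1 + v2 = 0
  · by_cases h13 : w + v1 + v3 = 0
    · by_cases h23 : w + v2 + v3 = 0
      · have e2 : v2 = v1 := by linear_combination h23 - h13
        have e3 : v3 = v1 := by linear_combination h23 - h12
        have hwv : w = -(2 * v1) := by linear_combination h12 - e2
        obtain ⟨y1, y2, y3, hy⟩ := core_special hp w v1 C D t hv1 hwv
        refine ⟨y1, y2, y3, ?_⟩
        linear_combination hy
          + (-(w * y2 ^ 2) + (2 * C - (v1 * y1 + v2 * y2 + v3 * y3)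
              - (v1 * y1 + v1 * y2 + v1 * y3)) * y2) * e2
          + (-(w * y3 ^ 2) + (2 * C - (v1 * y1 + v2 * y2 + v3 * y3)
              - (v1 * y1 + v1 * y2 + v1 * y3)) * y3) * e3
      · obtain ⟨y1, y2, y3, hy⟩ := core_bin hp w v2 v3 v1 C D t hw hv2 hv3 h2 h23
        exact ⟨y3, y1, y2, by linear_combination hy⟩
    · obtain ⟨y1, y2, y3, hy⟩ := core_bin hp w v1 v3 v2 C D t hw hv1 hv3 h1 h13
      exact ⟨y1, y3, y2, by linear_combination hy⟩
  · exact core_bin hp w v1 v2 v3 C D t hw hv1 hv2 h1 h12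

lemma toZMod_eq_zero_iff (z : ℤ_[p]) : PadicInt.toZMod z = 0 ↔ ¬IsUnit z := by
  rw [← RingHom.mem_ker, PadicInt.ker_toZMod, IsLocalRing.mem_maximalIdeal, mem_nonunits_iff]

lemma unit_iff' (z : ℤ_[p]) : IsUnit z ↔ PadicInt.toZMod z ≠ 0 := by
  rw [Ne, toZMod_eq_zero_iff, not_not]

lemma lift_spec (a : ZMod p) : PadicInt.toZMod ((a.val : ℤ_[p])) = a := by
  rw [map_natCast]
  exact ZMod.natCast_rightInverse a

lemma unit_two (hp : p ≠ 2) : IsUnit (2 : ℤ_[p]) := by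
  rw [unit_iff']
  have : PadicInt.toZMod (2 : ℤ_[p]) = 2 := map_ofNat _ 2
  rw [this]
  exact two_ne' hp

lemma hensel_quad (α β γ x₀ : ℤ_[p])
    (h0 : PadicInt.toZMod (α * x₀ ^ 2 + β * x₀ + γ) = 0)
    (hd : IsUnit (2 * α * x₀ + β)) :
    ∃ z : ℤ_[p], α * z ^ 2 + β * z + γ = 0 ∧ PadicInt.toZMod z = PadicInt.toZMod x₀ := by
  set F : Polynomial ℤ_[p] := C α * X ^ 2 + C β * X + C γ with hF
  have hFeval : ∀ y : ℤ_[p], F.eval y = α * y ^ 2 + β * y + γ := by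
    intro y; simp [hF]
  have hFder : F.derivative = C (2 * α) * X + C β := by
    simp [hF, C_ofNat]; ring
  have hFder_eval : F.derivative.eval x₀ = 2 * α * x₀ + β := by
    rw [hFder]; simp
  have hnorm1 : ‖F.derivative.eval x₀‖ = 1 := by
    rw [hFder_eval]; exact PadicInt.isUnit_iff.mp hd
  have hnorm0 : ‖F.eval x₀‖ < 1 := by
    rw [hFeval, ← PadicInt.not_isUnit_iff]
    exact (toZMod_eq_zero_iff _).mp h0
  obtain ⟨z, hz, hdist, -⟩ := hensels_lemma (F := F) (a := x₀)
    (by rw [coe_aeval_eq_eval, hnorm1]; simpa using hnorm0)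
  refine ⟨z, by rw [← hFeval]; exact hz, ?_⟩
  have : ¬IsUnit (z - x₀) := by
    rw [PadicInt.not_isUnit_iff]
    rw [coe_aeval_eq_eval, hnorm1] at hdist
    exact hdist
  have h' := (toZMod_eq_zero_iff _).mpr this
  rw [map_sub, sub_eq_zero] at h'
  exact h'

lemma quad_root (hp : p ≠ 2) (α β γ e : ℤ_[p]) (hα : IsUnit α) (he : IsUnit e)
    (hΔ : PadicInt.toZMod (β ^ 2 - 4 * (α * γ)) = PadicInt.toZMod (e ^ 2)) :
    ∃ x : ℤ_[p], α * x ^ 2 + β * x + γ = 0 ∧ IsUnit x := by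
  have h2 : IsUnit (2 : ℤ_[p]) := unit_two hp
  -- square root of the discriminant
  obtain ⟨z, hz, hze⟩ := hensel_quad 1 0 (-(β ^ 2 - 4 * (α * γ))) e
    (by
      simp only [map_add, map_mul, map_pow, map_one, map_zero, map_neg, hΔ]
      ring)
    (by
      have : 2 * 1 * e + 0 = 2 * e := by ring
      rw [this]
      exact h2.mul he)
  have hz' : z ^ 2 = β ^ 2 - 4 * (α * γ) := by linear_combination hz
  have hzu : IsUnit z := by
    rw [unit_iff', hze, ← unit_iff']; exact he
  obtain ⟨ι, hι⟩ := (h2.mul hα).exists_right_inv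
  have hιu : IsUnit ι := IsUnit.of_mul_eq_one (a := ι) (2 * α) (by linear_combination hι)
  have h2α : (2 * α : ℤ_[p]) ≠ 0 := (h2.mul hα).ne_zero
  set r1 : ℤ_[p] := (z - β) * ι with hr1def
  set r2 : ℤ_[p] := (-z - β) * ι with hr2def
  have h2x1 : 2 * α * r1 = z - β := by
    rw [hr1def]; linear_combination (z - β) * hι
  have h2x2 : 2 * α * r2 = -z - β := by
    rw [hr2def]; linear_combination (-z - β) * hι
  have key1 : (2 * α) * ((2 * α) * (α * r1 ^ 2 + β * r1 + γ)) = 0 := by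
    linear_combination (α * (2 * α * r1 + z + β)) * h2x1 + α * hz'
  have key2 : (2 * α) * ((2 * α) * (α * r2 ^ 2 + β * r2 + γ)) = 0 := by
    linear_combination (α * (2 * α * r2 - z + β)) * h2x2 + α * hz'
  have hf1 : α * r1 ^ 2 + β * r1 + γ = 0 :=
    mul_left_cancel₀ h2α (by rw [mul_zero]; exact mul_left_cancel₀ h2α (by rw [mul_zero]; exact key1))
  have hf2 : α * r2 ^ 2 + β * r2 + γ = 0 :=
    mul_left_cancel₀ h2α (by rw [mul_zero]; exact mul_left_cancel₀ h2α (by rw [mul_zero]; exact key2))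
  by_cases hu1 : IsUnit r1
  · exact ⟨r1, hf1, hu1⟩
  by_cases hu2 : IsUnit r2
  · exact ⟨r2, hf2, hu2⟩
  exfalso
  have m1 : r1 ∈ IsLocalRing.maximalIdeal ℤ_[p] :=
    (IsLocalRing.mem_maximalIdeal _).mpr (mem_nonunits_iff.mpr hu1)
  have m2 : r2 ∈ IsLocalRing.maximalIdeal ℤ_[p] :=
    (IsLocalRing.mem_maximalIdeal _).mpr (mem_nonunits_iff.mpr hu2)
  have msub := Ideal.sub_mem _ m1 m2
  have : IsUnit (r1 - r2) := by
    have : r1 - r2 = (2 * z) * ι := by rw [hr1def, hr2def]; ring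
    rw [this]
    exact (h2.mul hzu).mul hιu
  exact mem_nonunits_iff.mp ((IsLocalRing.mem_maximalIdeal _).mp msub) this

lemma sum_support_four {n : ℕ} {M : Type*} [AddCommMonoid M] (i1 i2 i3 i4 : Fin n)
    (h12 : i1 ≠ i2) (h13 : i1 ≠ i3) (h14 : i1 ≠ i4) (h23 : i2 ≠ i3) (h24 : i2 ≠ i4)
    (h34 : i3 ≠ i4) (f : Fin n → M)
    (hf : ∀ i, i ≠ i1 → i ≠ i2 → i ≠ i3 → i ≠ i4 → f i = 0) :
    ∑ i, f i = f i1 + f i2 + f i3 + f i4 := by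
  have hsub : ({i1, i2, i3, i4} : Finset (Fin n)) ⊆ Finset.univ := Finset.subset_univ _
  have h1 : ∑ i, f i = ∑ i ∈ ({i1, i2, i3, i4} : Finset (Fin n)), f i := by
    refine (Finset.sum_subset hsub ?_).symm
    intro x _ hx
    simp only [Finset.mem_insert, Finset.mem_singleton, not_or] at hx
    exact hf x hx.1 hx.2.1 hx.2.2.1 hx.2.2.2
  rw [h1]
  rw [Finset.sum_insert (by simp [h12, h13, h14]),
    Finset.sum_insert (by simp [h23, h24]),
    Finset.sum_insert (by simp [h34]), Finset.sum_singleton]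
  abel

lemma sum_support_five {n : ℕ} {M : Type*} [AddCommMonoid M] (i1 i2 i3 i4 i5 : Fin n)
    (h12 : i1 ≠ i2) (h13 : i1 ≠ i3) (h14 : i1 ≠ i4) (h15 : i1 ≠ i5) (h23 : i2 ≠ i3)
    (h24 : i2 ≠ i4) (h25 : i2 ≠ i5) (h34 : i3 ≠ i4) (h35 : i3 ≠ i5) (h45 : i4 ≠ i5)
    (f : Fin n → M)
    (hf : ∀ i, i ≠ i1 → i ≠ i2 → i ≠ i3 → i ≠ i4 → i ≠ i5 → f i = 0) :
    ∑ i, f i = f i1 + f i2 + f i3 + f i4 + f i5 := by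
  have hsub : ({i1, i2, i3, i4, i5} : Finset (Fin n)) ⊆ Finset.univ := Finset.subset_univ _
  have h1 : ∑ i, f i = ∑ i ∈ ({i1, i2, i3, i4, i5} : Finset (Fin n)), f i := by
    refine (Finset.sum_subset hsub ?_).symm
    intro x _ hx
    simp only [Finset.mem_insert, Finset.mem_singleton, not_or] at hx
    exact hf x hx.1 hx.2.1 hx.2.2.1 hx.2.2.2.1 hx.2.2.2.2
  rw [h1]
  rw [Finset.sum_insert (by simp [h12, h13, h14, h15]),
    Finset.sum_insert (by simp [h23, h24, h25]),
    Finset.sum_insert (by simp [h34, h35]),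
    Finset.sum_insert (by simp [h45]), Finset.sum_singleton]
  abel

lemma exists_distinct5 {ι : Type*} [DecidableEq ι] (s : Finset ι) (h : 5 ≤ s.card) :
    ∃ i1 i2 i3 i4 i5, i1 ∈ s ∧ i2 ∈ s ∧ i3 ∈ s ∧ i4 ∈ s ∧ i5 ∈ s ∧
      i1 ≠ i2 ∧ i1 ≠ i3 ∧ i1 ≠ i4 ∧ i1 ≠ i5 ∧ i2 ≠ i3 ∧ i2 ≠ i4 ∧ i2 ≠ i5 ∧
      i3 ≠ i4 ∧ i3 ≠ i5 ∧ i4 ≠ i5 := by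
  obtain ⟨i1, hi1⟩ := Finset.card_pos.mp (show 0 < s.card by omega)
  have h2 : 4 ≤ (s.erase i1).card := by rw [Finset.card_erase_of_mem hi1]; omega
  obtain ⟨i2, hi2⟩ := Finset.card_pos.mp (by omega : 0 < (s.erase i1).card)
  have h3 : 3 ≤ ((s.erase i1).erase i2).card := by
    rw [Finset.card_erase_of_mem hi2]; omega
  obtain ⟨i3, hi3⟩ := Finset.card_pos.mp (by omega : 0 < ((s.erase i1).erase i2).card)
  have h4 : 2 ≤ (((s.erase i1).erase i2).erase i3).card := by
    rw [Finset.card_erase_of_mem hi3]; omega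
  obtain ⟨i4, hi4⟩ := Finset.card_pos.mp
    (by omega : 0 < (((s.erase i1).erase i2).erase i3).card)
  have h5 : 1 ≤ ((((s.erase i1).erase i2).erase i3).erase i4).card := by
    rw [Finset.card_erase_of_mem hi4]; omega
  obtain ⟨i5, hi5⟩ := Finset.card_pos.mp
    (by omega : 0 < ((((s.erase i1).erase i2).erase i3).erase i4).card)
  simp only [Finset.mem_erase] at hi2 hi3 hi4 hi5
  exact ⟨i1, i2, i3, i4, i5, hi1, hi2.2, hi3.2.2, hi4.2.2.2, hi5.2.2.2.2,
    (hi2.1).symm, (hi3.2.1).symm, (hi4.2.2.1).symm, (hi5.2.2.2.1).symm,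
    (hi3.1).symm, (hi4.2.1).symm, (hi5.2.2.1).symm,
    (hi4.1).symm, (hi5.2.1).symm, (hi5.1).symm⟩

lemma exists_distinct4 {ι : Type*} [DecidableEq ι] (s : Finset ι) (h : 4 ≤ s.card) :
    ∃ i1 i2 i3 i4, i1 ∈ s ∧ i2 ∈ s ∧ i3 ∈ s ∧ i4 ∈ s ∧
      i1 ≠ i2 ∧ i1 ≠ i3 ∧ i1 ≠ i4 ∧ i2 ≠ i3 ∧ i2 ≠ i4 ∧ i3 ≠ i4 := by
  obtain ⟨i1, hi1⟩ := Finset.card_pos.mp (show 0 < s.card by omega)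
  have h2 : 3 ≤ (s.erase i1).card := by rw [Finset.card_erase_of_mem hi1]; omega
  obtain ⟨i2, hi2⟩ := Finset.card_pos.mp (by omega : 0 < (s.erase i1).card)
  have h3 : 2 ≤ ((s.erase i1).erase i2).card := by
    rw [Finset.card_erase_of_mem hi2]; omega
  obtain ⟨i3, hi3⟩ := Finset.card_pos.mp (by omega : 0 < ((s.erase i1).erase i2).card)
  have h4 : 1 ≤ (((s.erase i1).erase i2).erase i3).card := by
    rw [Finset.card_erase_of_mem hi3]; omega
  obtain ⟨i4, hi4⟩ := Finset.card_pos.mp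
    (by omega : 0 < (((s.erase i1).erase i2).erase i3).card)
  simp only [Finset.mem_erase] at hi2 hi3 hi4
  exact ⟨i1, i2, i3, i4, hi1, hi2.2, hi3.2.2, hi4.2.2.2,
    (hi2.1).symm, (hi3.2.1).symm, (hi4.2.2.1).symm,
    (hi3.1).symm, (hi4.2.1).symm, (hi4.1).symm⟩

lemma main_caseA (hp : p ≠ 2) {n : ℕ} (a C D : ℤ_[p]) (b : Fin n → ℤ_[p])
    (i1 i2 i3 i4 : Fin n)
    (h12 : i1 ≠ i2) (h13 : i1 ≠ i3) (h14 : i1 ≠ i4) (h23 : i2 ≠ i3) (h24 : i2 ≠ i4)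
    (h34 : i3 ≠ i4)
    (hu1 : IsUnit (b i1)) (hu2 : IsUnit (b i2)) (hu3 : IsUnit (b i3)) (hu4 : IsUnit (b i4))
    (hbad : ¬IsUnit (b i1 + a)) :
    ∃ x : Fin n → ℤ_[p],
      (C - ∑ i, b i * x i) ^ 2 + ∑ i, a * b i * x i ^ 2 = D * a ∧ ∃ i, IsUnit (x i) := by
  have hbad' : PadicInt.toZMod (b i1 + a) = 0 := (toZMod_eq_zero_iff _).mpr hbad
  have hφ2 : PadicInt.toZMod (2 : ℤ_[p]) = 2 := map_ofNat _ 2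
  have h2 : (2 : ZMod p) ≠ 0 := two_ne' hp
  set c : ℤ_[p] := if PadicInt.toZMod C = 0 then 1 else 0 with hc
  have hC' : PadicInt.toZMod (C - b i2 * c) ≠ 0 := by
    by_cases hCz : PadicInt.toZMod C = 0
    · rw [hc, if_pos hCz, mul_one, map_sub, hCz, zero_sub]
      exact neg_ne_zero.mpr ((unit_iff' _).mp hu2)
    · rw [hc, if_neg hCz, mul_zero, sub_zero]
      exact hCz
  set x₀ : ℤ_[p] := ((((PadicInt.toZMod (2 * b i1 * (C - b i2 * c)))⁻¹
      * PadicInt.toZMod ((C - b i2 * c) ^ 2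
      + a * (b i2 * c ^ 2 + b i3 * b i4 ^ 2 + b i4 * b i3 ^ 2) - D * a)).val : ℕ) : ℤ_[p])
    with hx₀def
  have hx₀ : PadicInt.toZMod x₀ = (PadicInt.toZMod (2 * b i1 * (C - b i2 * c)))⁻¹
      * PadicInt.toZMod ((C - b i2 * c) ^ 2
      + a * (b i2 * c ^ 2 + b i3 * b i4 ^ 2 + b i4 * b i3 ^ 2) - D * a) := lift_spec _
  have hσ : PadicInt.toZMod (2 * b i1 * (C - b i2 * c)) ≠ 0 := by
    rw [map_mul, map_mul, hφ2]
    exact mul_ne_zero (mul_ne_zero h2 ((unit_iff' _).mp hu1)) hC'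
  have h0 : PadicInt.toZMod ((b i1 * (b i1 + a)) * x₀ ^ 2
      + (-(2 * b i1 * (C - b i2 * c))) * x₀
      + ((C - b i2 * c) ^ 2 + a * (b i2 * c ^ 2 + b i3 * b i4 ^ 2 + b i4 * b i3 ^ 2)
        - D * a)) = 0 := by
    rw [map_add, map_add, map_mul, map_mul, hbad', mul_zero, zero_mul, zero_add,
      map_mul, map_neg, hx₀, neg_mul, mul_inv_cancel_left₀ hσ, neg_add_cancel]
  have hd : IsUnit (2 * (b i1 * (b i1 + a)) * x₀ + -(2 * b i1 * (C - b i2 * c))) := by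
    rw [unit_iff', map_add, map_neg]
    have e : PadicInt.toZMod (2 * (b i1 * (b i1 + a)) * x₀) = 0 := by
      rw [map_mul, map_mul, map_mul, hbad', mul_zero, mul_zero, zero_mul]
    rw [e, zero_add]
    exact neg_ne_zero.mpr hσ
  obtain ⟨z, hroot, -⟩ := hensel_quad (b i1 * (b i1 + a)) (-(2 * b i1 * (C - b i2 * c)))
    ((C - b i2 * c) ^ 2 + a * (b i2 * c ^ 2 + b i3 * b i4 ^ 2 + b i4 * b i3 ^ 2) - D * a)
    x₀ h0 hd
  set x : Fin n → ℤ_[p] := fun i =>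
    if i = i1 then z else if i = i2 then c else if i = i3 then b i4 else
    if i = i4 then -(b i3) else 0 with hx
  have hS : ∑ i, b i * x i
      = b i1 * z + b i2 * c + b i3 * b i4 + b i4 * (-(b i3)) := by
    rw [sum_support_four i1 i2 i3 i4 h12 h13 h14 h23 h24 h34 (fun i => b i * x i)
      (fun i hi1 hi2 hi3 hi4 => by simp [hx, hi1, hi2, hi3, hi4])]
    simp [hx, Ne.symm h12, Ne.symm h13, Ne.symm h14, Ne.symm h23, Ne.symm h24, Ne.symm h34]
  have hQ : ∑ i, a * b i * x i ^ 2
      = a * b i1 * z ^ 2 + a * b i2 * c ^ 2 + a * b i3 * (b i4) ^ 2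
        + a * b i4 * (-(b i3)) ^ 2 := by
    rw [sum_support_four i1 i2 i3 i4 h12 h13 h14 h23 h24 h34 (fun i => a * b i * x i ^ 2)
      (fun i hi1 hi2 hi3 hi4 => by simp [hx, hi1, hi2, hi3, hi4])]
    simp [hx, Ne.symm h12, Ne.symm h13, Ne.symm h14, Ne.symm h23, Ne.symm h24, Ne.symm h34]
  refine ⟨x, ?_, ⟨i3, ?_⟩⟩
  · rw [hS, hQ]
    linear_combination hroot
  · have : x i3 = b i4 := by simp [hx, Ne.symm h13, Ne.symm h23]
    rw [this]; exact hu4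

lemma main_caseB (hp : p ≠ 2) {n : ℕ} (a C D : ℤ_[p]) (b : Fin n → ℤ_[p])
    (i1 i2 i3 i4 : Fin n)
    (h12 : i1 ≠ i2) (h13 : i1 ≠ i3) (h14 : i1 ≠ i4) (h23 : i2 ≠ i3) (h24 : i2 ≠ i4)
    (h34 : i3 ≠ i4)
    (hu1 : IsUnit (b i1)) (hu2 : IsUnit (b i2)) (hu3 : IsUnit (b i3)) (hu4 : IsUnit (b i4))
    (ha : IsUnit a) (hw : IsUnit (b i1 + a)) :
    ∃ x : Fin n → ℤ_[p],
      (C - ∑ i, b i * x i) ^ 2 + ∑ i, a * b i * x i ^ 2 = D * a ∧ ∃ i, IsUnit (x i) := by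
  obtain ⟨y1, y2, y3, hy⟩ := core hp (PadicInt.toZMod (b i1 + a)) (PadicInt.toZMod (b i2))
    (PadicInt.toZMod (b i3)) (PadicInt.toZMod (b i4)) (PadicInt.toZMod C) (PadicInt.toZMod D)
    (PadicInt.toZMod (b i1 * a)) ((unit_iff' _).mp hw) ((unit_iff' _).mp hu2)
    ((unit_iff' _).mp hu3) ((unit_iff' _).mp hu4)
  simp only [map_add, map_mul] at hy
  set X2 : ℤ_[p] := ((y1.val : ℕ) : ℤ_[p]) with hX2def
  set X3 : ℤ_[p] := ((y2.val : ℕ) : ℤ_[p]) with hX3def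
  set X4 : ℤ_[p] := ((y3.val : ℕ) : ℤ_[p]) with hX4def
  have hX2 : PadicInt.toZMod X2 = y1 := lift_spec _
  have hX3 : PadicInt.toZMod X3 = y2 := lift_spec _
  have hX4 : PadicInt.toZMod X4 = y3 := lift_spec _
  have hΔ : PadicInt.toZMod ((-(2 * b i1 * (C - (b i2 * X2 + b i3 * X3 + b i4 * X4)))) ^ 2
      - 4 * ((b i1 * (b i1 + a)) * ((C - (b i2 * X2 + b i3 * X3 + b i4 * X4)) ^ 2
        + a * (b i2 * X2 ^ 2 + b i3 * X3 ^ 2 + b i4 * X4 ^ 2) - D * a)))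
      = PadicInt.toZMod ((2 * (b i1 * a)) ^ 2) := by
    rw [show (-(2 * b i1 * (C - (b i2 * X2 + b i3 * X3 + b i4 * X4)))) ^ 2
        - 4 * ((b i1 * (b i1 + a)) * ((C - (b i2 * X2 + b i3 * X3 + b i4 * X4)) ^ 2
          + a * (b i2 * X2 ^ 2 + b i3 * X3 ^ 2 + b i4 * X4 ^ 2) - D * a))
        = 4 * (b i1 * a) * ((b i1 + a) * (D - (b i2 * X2 ^ 2 + b i3 * X3 ^ 2 + b i4 * X4 ^ 2))
          - (C - (b i2 * X2 + b i3 * X3 + b i4 * X4)) ^ 2) from by ring]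
    simp only [map_mul, map_add, map_sub, map_pow, map_ofNat, hX2, hX3, hX4]
    linear_combination (4 * (PadicInt.toZMod (b i1) * PadicInt.toZMod a)) * hy
  obtain ⟨X1, hroot, hX1u⟩ := quad_root hp (b i1 * (b i1 + a))
    (-(2 * b i1 * (C - (b i2 * X2 + b i3 * X3 + b i4 * X4))))
    ((C - (b i2 * X2 + b i3 * X3 + b i4 * X4)) ^ 2
      + a * (b i2 * X2 ^ 2 + b i3 * X3 ^ 2 + b i4 * X4 ^ 2) - D * a)
    (2 * (b i1 * a)) (hu1.mul hw) ((unit_two hp).mul (hu1.mul ha)) hΔ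
  set x : Fin n → ℤ_[p] := fun i =>
    if i = i1 then X1 else if i = i2 then X2 else if i = i3 then X3 else
    if i = i4 then X4 else 0 with hx
  have hS : ∑ i, b i * x i
      = b i1 * X1 + b i2 * X2 + b i3 * X3 + b i4 * X4 := by
    rw [sum_support_four i1 i2 i3 i4 h12 h13 h14 h23 h24 h34 (fun i => b i * x i)
      (fun i hi1 hi2 hi3 hi4 => by simp [hx, hi1, hi2, hi3, hi4])]
    simp [hx, Ne.symm h12, Ne.symm h13, Ne.symm h14, Ne.symm h23, Ne.symm h24, Ne.symm h34]
  have hQ : ∑ i, a * b i * x i ^ 2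
      = a * b i1 * X1 ^ 2 + a * b i2 * X2 ^ 2 + a * b i3 * X3 ^ 2 + a * b i4 * X4 ^ 2 := by
    rw [sum_support_four i1 i2 i3 i4 h12 h13 h14 h23 h24 h34 (fun i => a * b i * x i ^ 2)
      (fun i hi1 hi2 hi3 hi4 => by simp [hx, hi1, hi2, hi3, hi4])]
    simp [hx, Ne.symm h12, Ne.symm h13, Ne.symm h14, Ne.symm h23, Ne.symm h24, Ne.symm h34]
  refine ⟨x, ?_, ⟨i1, ?_⟩⟩
  · rw [hS, hQ]
    linear_combination hroot
  · have : x i1 = X1 := by simp [hx]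
    rw [this]; exact hX1u

lemma main_caseII (hp : p ≠ 2) {n : ℕ} (a C D : ℤ_[p]) (b : Fin n → ℤ_[p])
    (i1 i2 i3 i4 i5 : Fin n)
    (h12 : i1 ≠ i2) (h13 : i1 ≠ i3) (h14 : i1 ≠ i4) (h15 : i1 ≠ i5) (h23 : i2 ≠ i3)
    (h24 : i2 ≠ i4) (h25 : i2 ≠ i5) (h34 : i3 ≠ i4) (h35 : i3 ≠ i5) (h45 : i4 ≠ i5)
    (hu1 : IsUnit (b i1)) (hu2 : IsUnit (b i2)) (hu3 : IsUnit (b i3)) (hu4 : IsUnit (b i4))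
    (hu5 : IsUnit (b i5)) (hw : IsUnit (b i4 + b i5)) :
    ∃ x : Fin n → ℤ_[p],
      (C - ∑ i, b i * x i) ^ 2 + ∑ i, a * b i * x i ^ 2 = D * a ∧ ∃ i, IsUnit (x i) := by
  obtain ⟨y1, y2, y3, hy⟩ := core hp (PadicInt.toZMod (b i4 + b i5)) (PadicInt.toZMod (b i1))
    (PadicInt.toZMod (b i2)) (PadicInt.toZMod (b i3)) (PadicInt.toZMod C) (PadicInt.toZMod D)
    (PadicInt.toZMod (b i4 * b i5)) ((unit_iff' _).mp hw) ((unit_iff' _).mp hu1)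
    ((unit_iff' _).mp hu2) ((unit_iff' _).mp hu3)
  simp only [map_add, map_mul] at hy
  set X1 : ℤ_[p] := ((y1.val : ℕ) : ℤ_[p]) with hX1def
  set X2 : ℤ_[p] := ((y2.val : ℕ) : ℤ_[p]) with hX2def
  set X3 : ℤ_[p] := ((y3.val : ℕ) : ℤ_[p]) with hX3def
  have hX1 : PadicInt.toZMod X1 = y1 := lift_spec _
  have hX2 : PadicInt.toZMod X2 = y2 := lift_spec _
  have hX3 : PadicInt.toZMod X3 = y3 := lift_spec _
  have hΔ : PadicInt.toZMod ((-(2 * b i4 * (C - (b i1 * X1 + b i2 * X2 + b i3 * X3)))) ^ 2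
      - 4 * ((b i4 * (b i4 + b i5)) * ((C - (b i1 * X1 + b i2 * X2 + b i3 * X3)) ^ 2
        - b i5 * (D - (b i1 * X1 ^ 2 + b i2 * X2 ^ 2 + b i3 * X3 ^ 2)))))
      = PadicInt.toZMod ((2 * (b i4 * b i5)) ^ 2) := by
    rw [show (-(2 * b i4 * (C - (b i1 * X1 + b i2 * X2 + b i3 * X3)))) ^ 2
        - 4 * ((b i4 * (b i4 + b i5)) * ((C - (b i1 * X1 + b i2 * X2 + b i3 * X3)) ^ 2
          - b i5 * (D - (b i1 * X1 ^ 2 + b i2 * X2 ^ 2 + b i3 * X3 ^ 2))))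
        = 4 * (b i4 * b i5) * ((b i4 + b i5)
            * (D - (b i1 * X1 ^ 2 + b i2 * X2 ^ 2 + b i3 * X3 ^ 2))
          - (C - (b i1 * X1 + b i2 * X2 + b i3 * X3)) ^ 2) from by ring]
    simp only [map_mul, map_add, map_sub, map_pow, map_ofNat, hX1, hX2, hX3]
    linear_combination (4 * (PadicInt.toZMod (b i4) * PadicInt.toZMod (b i5))) * hy
  obtain ⟨X4, hroot, hX4u⟩ := quad_root hp (b i4 * (b i4 + b i5))
    (-(2 * b i4 * (C - (b i1 * X1 + b i2 * X2 + b i3 * X3))))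
    ((C - (b i1 * X1 + b i2 * X2 + b i3 * X3)) ^ 2
      - b i5 * (D - (b i1 * X1 ^ 2 + b i2 * X2 ^ 2 + b i3 * X3 ^ 2)))
    (2 * (b i4 * b i5)) (hu4.mul hw) ((unit_two hp).mul (hu4.mul hu5)) hΔ
  obtain ⟨v5, hv5⟩ := hu5.exists_right_inv
  set X5 : ℤ_[p] := v5 * ((C - (b i1 * X1 + b i2 * X2 + b i3 * X3)) - b i4 * X4) with hX5def
  have hX5 : b i5 * X5 = (C - (b i1 * X1 + b i2 * X2 + b i3 * X3)) - b i4 * X4 := by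
    rw [hX5def]
    linear_combination ((C - (b i1 * X1 + b i2 * X2 + b i3 * X3)) - b i4 * X4) * hv5
  have h2' : b i5 * (b i5 * X5 ^ 2)
      = b i5 * ((D - (b i1 * X1 ^ 2 + b i2 * X2 ^ 2 + b i3 * X3 ^ 2)) - b i4 * X4 ^ 2) := by
    linear_combination (b i5 * X5 + (C - (b i1 * X1 + b i2 * X2 + b i3 * X3)) - b i4 * X4)
      * hX5 + hroot
  have hX5sq : b i5 * X5 ^ 2
      = (D - (b i1 * X1 ^ 2 + b i2 * X2 ^ 2 + b i3 * X3 ^ 2)) - b i4 * X4 ^ 2 :=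
    mul_left_cancel₀ hu5.ne_zero h2'
  set x : Fin n → ℤ_[p] := fun i =>
    if i = i1 then X1 else if i = i2 then X2 else if i = i3 then X3 else
    if i = i4 then X4 else if i = i5 then X5 else 0 with hx
  have hS : ∑ i, b i * x i
      = b i1 * X1 + b i2 * X2 + b i3 * X3 + b i4 * X4 + b i5 * X5 := by
    rw [sum_support_five i1 i2 i3 i4 i5 h12 h13 h14 h15 h23 h24 h25 h34 h35 h45
      (fun i => b i * x i)
      (fun i hi1 hi2 hi3 hi4 hi5 => by simp [hx, hi1, hi2, hi3, hi4, hi5])]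
    simp [hx, Ne.symm h12, Ne.symm h13, Ne.symm h14, Ne.symm h15, Ne.symm h23, Ne.symm h24,
      Ne.symm h25, Ne.symm h34, Ne.symm h35, Ne.symm h45]
  have hQ : ∑ i, a * b i * x i ^ 2
      = a * b i1 * X1 ^ 2 + a * b i2 * X2 ^ 2 + a * b i3 * X3 ^ 2 + a * b i4 * X4 ^ 2
        + a * b i5 * X5 ^ 2 := by
    rw [sum_support_five i1 i2 i3 i4 i5 h12 h13 h14 h15 h23 h24 h25 h34 h35 h45
      (fun i => a * b i * x i ^ 2)
      (fun i hi1 hi2 hi3 hi4 hi5 => by simp [hx, hi1, hi2, hi3, hi4, hi5])]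
    simp [hx, Ne.symm h12, Ne.symm h13, Ne.symm h14, Ne.symm h15, Ne.symm h23, Ne.symm h24,
      Ne.symm h25, Ne.symm h34, Ne.symm h35, Ne.symm h45]
  refine ⟨x, ?_, ⟨i4, ?_⟩⟩
  · rw [hS, hQ]
    linear_combination (b i5 * X5 + b i4 * X4 - (C - (b i1 * X1 + b i2 * X2 + b i3 * X3)))
      * hX5 + a * hX5sq
  · have : x i4 = X4 := by simp [hx, Ne.symm h14, Ne.symm h24, Ne.symm h34]
    rw [this]; exact hX4u

/-- If among the positive integers `a₁, a₂, …, aₙ` (with multiplicity) at least five are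
`p`-adic units (`p` an odd prime), then for all `A, B, k ∈ ℤ_p` the equation
`(B+k(m-2) - ∑ aᵢxᵢ)² + ∑ a₁aᵢxᵢ² = (2A+B+k(m-4))a₁` has a primitive solution
`(x₂,…,xₙ) ∈ ℤ_p^{n-1}`, i.e. one with some coordinate a unit. -/
theorem stmt_11 (p : ℕ) [Fact p.Prime] (hp : p ≠ 2) (m : ℤ) (hm : 3 ≤ m)
    (n : ℕ) (a₁ : ℤ) (b : Fin n → ℤ) (ha₁ : 0 < a₁) (hb : ∀ i, 0 < b i)
    (hunits : 5 ≤ (if IsUnit ((a₁ : ℤ_[p])) then 1 else 0)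
        + (univ.filter (fun i => IsUnit ((b i : ℤ_[p])))).card)
    (A B k : ℤ_[p]) :
    ∃ x : Fin n → ℤ_[p],
      (B + k * ((m : ℤ_[p]) - 2) - ∑ i, (b i : ℤ_[p]) * x i) ^ 2
          + ∑ i, (a₁ : ℤ_[p]) * (b i : ℤ_[p]) * (x i) ^ 2
        = (2 * A + B + k * ((m : ℤ_[p]) - 4)) * (a₁ : ℤ_[p]) ∧
      ∃ i, IsUnit (x i) := by
  by_cases hA1 : IsUnit ((a₁ : ℤ_[p]))
  · rw [if_pos hA1] at hunits
    have h4 : 4 ≤ (univ.filter (fun i => IsUnit ((b i : ℤ_[p])))).card := by omega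
    obtain ⟨i1, i2, i3, i4, m1, m2, m3, m4, h12, h13, h14, h23, h24, h34⟩ :=
      exists_distinct4 _ h4
    have hu1 : IsUnit ((b i1 : ℤ_[p])) := (Finset.mem_filter.mp m1).2
    have hu2 : IsUnit ((b i2 : ℤ_[p])) := (Finset.mem_filter.mp m2).2
    have hu3 : IsUnit ((b i3 : ℤ_[p])) := (Finset.mem_filter.mp m3).2
    have hu4 : IsUnit ((b i4 : ℤ_[p])) := (Finset.mem_filter.mp m4).2
    by_cases hw : IsUnit ((b i1 : ℤ_[p]) + (a₁ : ℤ_[p]))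
    · exact main_caseB hp ((a₁ : ℤ_[p])) (B + k * ((m : ℤ_[p]) - 2))
        (2 * A + B + k * ((m : ℤ_[p]) - 4)) (fun i => ((b i : ℤ_[p]))) i1 i2 i3 i4
        h12 h13 h14 h23 h24 h34 hu1 hu2 hu3 hu4 hA1 hw
    · exact main_caseA hp ((a₁ : ℤ_[p])) (B + k * ((m : ℤ_[p]) - 2))
        (2 * A + B + k * ((m : ℤ_[p]) - 4)) (fun i => ((b i : ℤ_[p]))) i1 i2 i3 i4
        h12 h13 h14 h23 h24 h34 hu1 hu2 hu3 hu4 hw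
  · rw [if_neg hA1] at hunits
    have h5 : 5 ≤ (univ.filter (fun i => IsUnit ((b i : ℤ_[p])))).card := by omega
    obtain ⟨i1, i2, i3, i4, i5, m1, m2, m3, m4, m5,
      h12, h13, h14, h15, h23, h24, h25, h34, h35, h45⟩ := exists_distinct5 _ h5
    have hu1 : IsUnit ((b i1 : ℤ_[p])) := (Finset.mem_filter.mp m1).2
    have hu2 : IsUnit ((b i2 : ℤ_[p])) := (Finset.mem_filter.mp m2).2
    have hu3 : IsUnit ((b i3 : ℤ_[p])) := (Finset.mem_filter.mp m3).2
    have hu4 : IsUnit ((b i4 : ℤ_[p])) := (Finset.mem_filter.mp m4).2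
    have hu5 : IsUnit ((b i5 : ℤ_[p])) := (Finset.mem_filter.mp m5).2
    by_cases p45 : IsUnit ((b i4 : ℤ_[p]) + (b i5 : ℤ_[p]))
    · exact main_caseII hp ((a₁ : ℤ_[p])) (B + k * ((m : ℤ_[p]) - 2))
        (2 * A + B + k * ((m : ℤ_[p]) - 4)) (fun i => ((b i : ℤ_[p]))) i1 i2 i3 i4 i5
        h12 h13 h14 h15 h23 h24 h25 h34 h35 h45 hu1 hu2 hu3 hu4 hu5 p45
    by_cases p35 : IsUnit ((b i3 : ℤ_[p]) + (b i5 : ℤ_[p]))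
    · exact main_caseII hp ((a₁ : ℤ_[p])) (B + k * ((m : ℤ_[p]) - 2))
        (2 * A + B + k * ((m : ℤ_[p]) - 4)) (fun i => ((b i : ℤ_[p]))) i1 i2 i4 i3 i5
        h12 h14 h13 h15 (Ne.symm h24).symm h23 h25 (Ne.symm h34) h45 h35
        hu1 hu2 hu4 hu3 hu5 p35
    by_cases p34 : IsUnit ((b i3 : ℤ_[p]) + (b i4 : ℤ_[p]))
    · exact main_caseII hp ((a₁ : ℤ_[p])) (B + k * ((m : ℤ_[p]) - 2))
        (2 * A + B + k * ((m : ℤ_[p]) - 4)) (fun i => ((b i : ℤ_[p]))) i1 i2 i5 i3 i4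
        h12 h15 h13 h14 h25 h23 h24 (Ne.symm h35) (Ne.symm h45) h34
        hu1 hu2 hu5 hu3 hu4 p34
    exfalso
    have e45 : PadicInt.toZMod ((b i4 : ℤ_[p]) + (b i5 : ℤ_[p])) = 0 :=
      (toZMod_eq_zero_iff _).mpr p45
    have e35 : PadicInt.toZMod ((b i3 : ℤ_[p]) + (b i5 : ℤ_[p])) = 0 :=
      (toZMod_eq_zero_iff _).mpr p35
    have e34 : PadicInt.toZMod ((b i3 : ℤ_[p]) + (b i4 : ℤ_[p])) = 0 :=
      (toZMod_eq_zero_iff _).mpr p34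
    simp only [map_add] at e45 e35 e34
    have h2 : (2 : ZMod p) ≠ 0 := two_ne' hp
    have hu5' : PadicInt.toZMod ((b i5 : ℤ_[p])) ≠ 0 := (unit_iff' _).mp hu5
    have : (2 : ZMod p) * PadicInt.toZMod ((b i5 : ℤ_[p])) = 0 := by
      linear_combination e45 + e35 - e34
    exact (mul_ne_zero h2 hu5') this
end

section
/- Over ℚ_p (any prime p), every nondegenerate quadratic form in n ≥ 5 variables is isotropic; in particular, for positive integers a_1,…,a_n with n ≥ 5, the form a_1 x_1^2 + ⋯ + a_n x_n^2 has a nontrivial zero in ℚ_p^n. -/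
set_option maxRecDepth 100000
set_option synthInstance.maxHeartbeats 1000000
set_option synthInstance.maxSize 5000

open Finset

namespace Stmt16Aux

variable {p : ℕ} [Fact p.Prime]

/-- Hensel lifting step: an approximate diagonal zero lifts to an exact one. -/
lemma hensel_step {n : ℕ} (w x : Fin n → ℤ_[p]) (i : Fin n)
    (h : ‖∑ j, w j * x j ^ 2‖ < ‖2 * w i * x i‖ ^ 2) :
    ∃ v : Fin n → ℤ_[p], v ≠ 0 ∧ ∑ j, w j * v j ^ 2 = 0 := by
  set B : ℤ_[p] := ∑ j ∈ Finset.univ.erase i, w j * x j ^ 2 with hB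
  have hsplit : ∑ j, w j * x j ^ 2 = w i * x i ^ 2 + B :=
    (Finset.add_sum_erase _ _ (mem_univ i)).symm
  set F : Polynomial ℤ_[p] := Polynomial.C (w i) * Polynomial.X ^ 2 + Polynomial.C B with hF
  have hFe : ∀ t, F.eval t = w i * t ^ 2 + B := by intro t; simp [hF]
  have hFd : ∀ t, F.derivative.eval t = 2 * w i * t := by
    intro t; simp [hF]; ring
  have hnorm : ‖F.eval (x i)‖ < ‖F.derivative.eval (x i)‖ ^ 2 := by
    rw [hFe, hFd, ← hsplit]; exact h
  obtain ⟨z, hz0, hz1, -, -⟩ := hensels_lemma hnorm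
  have hne : (2 : ℤ_[p]) * w i * x i ≠ 0 := by
    intro h0
    rw [h0, norm_zero] at h
    have := norm_nonneg (∑ j, w j * x j ^ 2)
    nlinarith
  have hxi : x i ≠ 0 := fun h0 => hne (by rw [h0, mul_zero])
  have hle : ‖2 * w i * x i‖ ≤ ‖x i‖ := by
    rw [norm_mul]
    calc ‖2 * w i‖ * ‖x i‖ ≤ 1 * ‖x i‖ := by
          gcongr; exact PadicInt.norm_le_one _
      _ = ‖x i‖ := one_mul _
  have hzne : z ≠ 0 := by
    intro h0
    rw [Polynomial.coe_aeval_eq_eval, hFd] at hz1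
    rw [h0, zero_sub, norm_neg] at hz1
    exact absurd (lt_of_lt_of_le hz1 hle) (lt_irrefl _)
  refine ⟨Function.update x i z, ?_, ?_⟩
  · intro hv
    exact hzne (by simpa using congrFun hv i)
  · rw [← Finset.add_sum_erase _ (fun j => w j * (Function.update x i z j) ^ 2) (mem_univ i),
      Function.update_self]
    have hB' : ∑ j ∈ Finset.univ.erase i, w j * (Function.update x i z j) ^ 2 = B := by
      refine Finset.sum_congr rfl fun j hj => ?_
      rw [Function.update_of_ne (Finset.ne_of_mem_erase hj)]
    rw [hB']
    have h2 := hFe z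
    rw [Polynomial.coe_aeval_eq_eval] at hz0
    rw [hz0] at h2
    exact h2.symm

/-- Transfer a diagonal zero along an injection of index types. -/
lemma embed {R : Type*} [CommRing R] {m n : ℕ} (f : Fin m → Fin n)
    (hf : Function.Injective f) (w : Fin n → R) (t : Fin m → R) (ht : t ≠ 0)
    (hsum : ∑ i, w (f i) * t i ^ 2 = 0) :
    ∃ v : Fin n → R, v ≠ 0 ∧ ∑ j, w j * v j ^ 2 = 0 := by
  classical
  set v : Fin n → R := fun j => (Function.partialInv f j).elim 0 t with hv
  have hvf : ∀ i, v (f i) = t i := by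
    intro i; simp [hv, Function.partialInv_left hf]
  have hv0 : ∀ j, j ∉ Finset.univ.image f → v j = 0 := by
    intro j hj
    have : Function.partialInv f j = none := by
      apply dif_neg
      rintro ⟨i, rfl⟩
      exact hj (Finset.mem_image_of_mem f (mem_univ i))
    simp [hv, this]
  obtain ⟨i, hti⟩ := Function.ne_iff.mp ht
  refine ⟨v, ?_, ?_⟩
  · intro h0
    exact hti (by rw [← hvf i]; exact congrFun h0 (f i))
  · have h1 : ∑ j, w j * v j ^ 2 = ∑ j ∈ Finset.univ.image f, w j * v j ^ 2 := by
      refine (Finset.sum_subset (Finset.subset_univ _) fun j _ hj => ?_).symm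
      rw [hv0 j hj]; ring
    rw [h1, Finset.sum_image (fun a _ b _ hab => hf hab)]
    simpa [hvf] using hsum

lemma norm_le_of_toZModPow {n : ℕ} {S : ℤ_[p]} (h : PadicInt.toZModPow n S = 0) :
    ‖S‖ ≤ (p : ℝ) ^ (-n : ℤ) := by
  rw [PadicInt.norm_le_pow_iff_mem_span_pow, ← PadicInt.ker_toZModPow]
  exact RingHom.mem_ker.mpr h


lemma norm_two_eq_one (hp : p ≠ 2) : ‖(2 : ℤ_[p])‖ = 1 := by
  refine le_antisymm (PadicInt.norm_le_one _) ?_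
  by_contra hlt
  push_neg at hlt
  have h2 : ((2 : ℤ) : ℤ_[p]) = (2 : ℤ_[p]) := by norm_cast
  rw [← h2, PadicInt.norm_int_lt_one_iff_dvd] at hlt
  have : (p : ℤ) ∣ 2 := hlt
  have hp2 : p ∣ 2 := by exact_mod_cast this
  exact hp ((Nat.prime_dvd_prime_iff_eq Fact.out Nat.prime_two).mp hp2)

lemma tern_odd (hp : p ≠ 2) (a b c : ℤ_[p]) (ha : ‖a‖ = 1) (hb : ‖b‖ = 1) (hc : ‖c‖ = 1) :
    ∃ v : Fin 3 → ℤ_[p], v ≠ 0 ∧ ∑ j, (![a, b, c]) j * v j ^ 2 = 0 := by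
  haveI : NeZero p := ⟨(Fact.out : p.Prime).ne_zero⟩
  set za := PadicInt.toZMod a
  set zb := PadicInt.toZMod b
  set zc := PadicInt.toZMod c
  have hza : za ≠ 0 := ((PadicInt.isUnit_iff.mpr ha).map PadicInt.toZMod).ne_zero
  have hzb : zb ≠ 0 := ((PadicInt.isUnit_iff.mpr hb).map PadicInt.toZMod).ne_zero
  have hzc : zc ≠ 0 := ((PadicInt.isUnit_iff.mpr hc).map PadicInt.toZMod).ne_zero
  have hf2 : (Polynomial.C za * Polynomial.X ^ 2).degree = 2 :=
    Polynomial.degree_C_mul_X_pow 2 hza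
  have hg2 : (Polynomial.C zb * Polynomial.X ^ 2 + Polynomial.C zc).degree = 2 := by
    rw [Polynomial.degree_add_eq_left_of_degree_lt]
    · exact Polynomial.degree_C_mul_X_pow 2 hzb
    · rw [Polynomial.degree_C_mul_X_pow 2 hzb]
      exact lt_of_le_of_lt Polynomial.degree_C_le (by norm_num)
  have hcard : Fintype.card (ZMod p) % 2 = 1 := by
    rw [ZMod.card]
    exact Nat.odd_iff.mp ((Fact.out : p.Prime).odd_of_ne_two hp)
  obtain ⟨A, B, hAB⟩ := FiniteField.exists_root_sum_quadratic hf2 hg2 hcard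
  simp only [Polynomial.eval_add, Polynomial.eval_mul, Polynomial.eval_pow, Polynomial.eval_C,
    Polynomial.eval_X] at hAB
  set x : Fin 3 → ℤ_[p] := ![(A.val : ℤ_[p]), (B.val : ℤ_[p]), 1] with hx
  have hmod : PadicInt.toZMod (∑ j, (![a, b, c]) j * x j ^ 2) = 0 := by
    rw [Fin.sum_univ_three]
    simp only [hx]
    simp only [Matrix.cons_val_zero, Matrix.cons_val_one, Matrix.head_cons,
      Matrix.cons_val_two, Matrix.tail_cons]
    rw [map_add, map_add, map_mul, map_mul, map_mul, map_pow, map_pow, map_pow, map_one]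
    rw [map_natCast, map_natCast]
    rw [ZMod.natCast_rightInverse A, ZMod.natCast_rightInverse B]
    rw [one_pow, mul_one]
    linear_combination hAB
  have hdvd : (p : ℤ_[p]) ∣ ∑ j, (![a, b, c]) j * x j ^ 2 := by
    rw [← Ideal.mem_span_singleton, ← PadicInt.maximalIdeal_eq_span_p, ← PadicInt.ker_toZMod]
    exact RingHom.mem_ker.mpr hmod
  have hlt : ‖∑ j, (![a, b, c]) j * x j ^ 2‖ < 1 :=
    (PadicInt.norm_lt_one_iff_dvd _).mpr hdvd
  refine hensel_step ![a, b, c] x 2 ?_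
  have : ‖(2 : ℤ_[p]) * (![a, b, c]) 2 * x 2‖ = 1 := by
    have hx2 : x 2 = 1 := rfl
    have hc2 : (![a, b, c]) 2 = c := rfl
    rw [hx2, hc2, mul_one, norm_mul, norm_two_eq_one hp, hc, one_mul]
  rw [this, one_pow]
  exact hlt



/-! ### The prime 2 -/

theorem claimT : ∀ a < 8, ∀ b < 8, ∀ c < 8, a % 2 = 1 → b % 2 = 1 → c % 2 = 1 →
    ¬(a % 4 = b % 4 ∧ b % 4 = c % 4) →
    ∃ x < 3, ∃ y < 3, ∃ z < 3,
      (a * x ^ 2 + b * y ^ 2 + c * z ^ 2) % 8 = 0 ∧ (x = 1 ∨ y = 1 ∨ z = 1) := by decide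

set_option maxHeartbeats 4000000 in
theorem claimB : ∀ (b : Fin 2) (e₀ e₁ e₂ e₃ e₄ : Bool) (g₀ g₁ g₂ g₃ g₄ : Fin 2),
    3 ≤ (cond e₀ 0 1) + (cond e₁ 0 1) + (cond e₂ 0 1) + (cond e₃ 0 1) + (cond e₄ 0 1) →
    ∃ x₀ x₁ x₂ x₃ x₄ : Fin 3,
      ((cond e₀ (2*(1+2*g₀.val)) (1+2*b.val+4*g₀.val)) * x₀.val ^ 2
      + (cond e₁ (2*(1+2*g₁.val)) (1+2*b.val+4*g₁.val)) * x₁.val ^ 2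
      + (cond e₂ (2*(1+2*g₂.val)) (1+2*b.val+4*g₂.val)) * x₂.val ^ 2
      + (cond e₃ (2*(1+2*g₃.val)) (1+2*b.val+4*g₃.val)) * x₃.val ^ 2
      + (cond e₄ (2*(1+2*g₄.val)) (1+2*b.val+4*g₄.val)) * x₄.val ^ 2) % 8 = 0
      ∧ ((e₀ = false ∧ x₀ = 1) ∨ (e₁ = false ∧ x₁ = 1) ∨ (e₂ = false ∧ x₂ = 1)
        ∨ (e₃ = false ∧ x₃ = 1) ∨ (e₄ = false ∧ x₄ = 1)) := by decide

lemma norm_two' : ‖(2 : ℤ_[2])‖ = 2⁻¹ := by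
  rw [show ((2:ℤ_[2])) = (((2:ℕ)):ℤ_[2]) by norm_cast, PadicInt.norm_p]
  norm_num

lemma norm_natCast_odd {m : ℕ} (hm : m % 2 = 1) : ‖((m : ℕ) : ℤ_[2])‖ = 1 := by
  refine le_antisymm (PadicInt.norm_le_one _) ?_
  by_contra hlt
  push_neg at hlt
  rw [show ((m:ℤ_[2])) = (((m:ℤ)):ℤ_[2]) by push_cast; ring, PadicInt.norm_int_lt_one_iff_dvd] at hlt
  obtain ⟨t, ht⟩ := hlt
  omega

/-- `u` is congruent to its approximation `u.appr 3` modulo 8. -/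
lemma appr_dvd (u : ℤ_[2]) : (8 : ℤ_[2]) ∣ (u - ((u.appr 3 : ℕ) : ℤ_[2])) := by
  have h := PadicInt.appr_spec 3 u
  rw [Ideal.mem_span_singleton] at h
  have h8 : (((2:ℕ):ℤ_[2]) ^ 3) = 8 := by push_cast; norm_num
  rwa [h8] at h

lemma appr_odd {u : ℤ_[2]} (hu : ‖u‖ = 1) : u.appr 3 % 2 = 1 := by
  rcases Nat.even_or_odd (u.appr 3) with he | ho
  · exfalso
    obtain ⟨t, ht⟩ := he
    obtain ⟨s, hs⟩ := appr_dvd u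
    have h2 : (2 : ℤ_[2]) ∣ u := by
      refine ⟨4 * s + t, ?_⟩
      have : u = 8 * s + ((u.appr 3 : ℕ) : ℤ_[2]) := by linear_combination hs
      rw [this, ht]
      push_cast
      ring
    have := (PadicInt.norm_lt_one_iff_dvd u).mpr (by exact_mod_cast h2)
    rw [hu] at this
    exact absurd this (lt_irrefl _)
  · obtain ⟨t, ht⟩ := ho
    omega

lemma appr_lt8 (u : ℤ_[2]) : u.appr 3 < 8 := by
  have := PadicInt.appr_lt u 3
  norm_num at this
  exact this

lemma norm_eight : ‖(8:ℤ_[2])‖ = (8:ℝ)⁻¹ := by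
  rw [show ((8:ℤ_[2])) = 2*(2*2) by norm_num, norm_mul, norm_mul, norm_two']
  norm_num

lemma hensel2 {n : ℕ} (w x : Fin n → ℤ_[2]) (i : Fin n) (hwi : ‖w i‖ = 1) (hxi : ‖x i‖ = 1)
    (h8 : (8 : ℤ_[2]) ∣ ∑ j, w j * x j ^ 2) :
    ∃ v : Fin n → ℤ_[2], v ≠ 0 ∧ ∑ j, w j * v j ^ 2 = 0 := by
  refine hensel_step w x i ?_
  obtain ⟨t, ht⟩ := h8
  have h1 : ‖∑ j, w j * x j ^ 2‖ ≤ (8:ℝ)⁻¹ := by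
    rw [ht, norm_mul, norm_eight]
    calc (8:ℝ)⁻¹ * ‖t‖ ≤ (8:ℝ)⁻¹ * 1 := by gcongr; exact PadicInt.norm_le_one t
      _ = (8:ℝ)⁻¹ := mul_one _
  have h2 : ‖(2:ℤ_[2]) * w i * x i‖ = 2⁻¹ := by
    rw [norm_mul, norm_mul, norm_two', hwi, hxi]
    norm_num
  rw [h2]
  calc ‖∑ j, w j * x j ^ 2‖ ≤ (8:ℝ)⁻¹ := h1
    _ < (2⁻¹ : ℝ) ^ 2 := by norm_num


lemma tern2 (a b c : ℤ_[2]) (ha : ‖a‖ = 1) (hb : ‖b‖ = 1) (hc : ‖c‖ = 1)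
    (hnc : ¬(a.appr 3 % 4 = b.appr 3 % 4 ∧ b.appr 3 % 4 = c.appr 3 % 4)) :
    ∃ v : Fin 3 → ℤ_[2], v ≠ 0 ∧ ∑ j, (![a, b, c]) j * v j ^ 2 = 0 := by
  obtain ⟨x, hx3, y, hy3, z, hz3, hsum, hone⟩ :=
    claimT _ (appr_lt8 a) _ (appr_lt8 b) _ (appr_lt8 c)
      (appr_odd ha) (appr_odd hb) (appr_odd hc) hnc
  set X : Fin 3 → ℤ_[2] := ![((x:ℕ) : ℤ_[2]), ((y:ℕ) : ℤ_[2]), ((z:ℕ) : ℤ_[2])] with hX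
  have h8 : (8 : ℤ_[2]) ∣ ∑ j, (![a, b, c]) j * X j ^ 2 := by
    set N : ℕ := a.appr 3 * x ^ 2 + b.appr 3 * y ^ 2 + c.appr 3 * z ^ 2 with hN
    obtain ⟨q, hq⟩ := Nat.dvd_of_mod_eq_zero hsum
    obtain ⟨s, hs⟩ := appr_dvd a
    obtain ⟨t, ht⟩ := appr_dvd b
    obtain ⟨r, hr⟩ := appr_dvd c
    refine ⟨((x:ℕ):ℤ_[2])^2 * s + ((y:ℕ):ℤ_[2])^2 * t + ((z:ℕ):ℤ_[2])^2 * r + (q:ℕ), ?_⟩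
    rw [Fin.sum_univ_three]
    simp only [hX, Matrix.cons_val_zero, Matrix.cons_val_one, Matrix.head_cons,
      Matrix.cons_val_two, Matrix.tail_cons]
    have hqz : ((N : ℕ) : ℤ_[2]) = 8 * (q:ℕ) := by exact_mod_cast congrArg (Nat.cast : ℕ → ℤ_[2]) hq
    rw [hN] at hqz
    push_cast at hqz ⊢
    linear_combination ((x:ℕ):ℤ_[2])^2 * hs + ((y:ℕ):ℤ_[2])^2 * ht + ((z:ℕ):ℤ_[2])^2 * hr + hqz
  rcases hone with h1 | h1 | h1
  · refine hensel2 ![a, b, c] X 0 (by simpa using ha) ?_ h8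
    rw [show X 0 = ((1:ℕ):ℤ_[2]) by simp [hX, h1]]; norm_num
  · refine hensel2 ![a, b, c] X 1 (by simpa using hb) ?_ h8
    rw [show X 1 = ((1:ℕ):ℤ_[2]) by simp [hX, h1]]; norm_num
  · refine hensel2 ![a, b, c] X 2 (by simpa using hc) ?_ h8
    rw [show X 2 = ((1:ℕ):ℤ_[2]) by simp [hX, h1]]; norm_num


set_option maxHeartbeats 1000000 in
lemma core2 (u : Fin 5 → ℤ_[2]) (hu : ∀ i, ‖u i‖ = 1) (e : Fin 5 → Bool)
    (h3 : 3 ≤ (Finset.univ.filter fun i => e i = false).card) :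
    ∃ v : Fin 5 → ℤ_[2], v ≠ 0 ∧ ∑ i, u i * (2:ℤ_[2]) ^ (cond (e i) 1 0) * v i ^ 2 = 0 := by
  classical
  set W : Fin 5 → ℤ_[2] := fun i => u i * (2:ℤ_[2]) ^ (cond (e i) 1 0) with hW
  set F := Finset.univ.filter (fun i => e i = false) with hF
  set M : Fin 5 → ℕ := fun i => (u i).appr 3 with hM
  have hModd : ∀ i, M i % 2 = 1 := fun i => appr_odd (hu i)
  have hMlt : ∀ i, M i < 8 := fun i => appr_lt8 (u i)
  have hMdvd : ∀ i, (8:ℤ_[2]) ∣ (u i - ((M i : ℕ) : ℤ_[2])) := fun i => appr_dvd (u i)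
  have heF : ∀ i, i ∈ F ↔ e i = false := by
    intro i; rw [hF, Finset.mem_filter]; simp
  by_cases hcong : ∀ i ∈ F, ∀ j ∈ F, M i % 4 = M j % 4
  · -- all unit positions congruent mod 4
    have hFpos : 0 < F.card := by omega
    obtain ⟨i₀, hi₀⟩ := Finset.card_pos.mp hFpos
    have hM4 : ∀ i, M i % 4 % 2 = 1 := by
      intro i; rw [Nat.mod_mod_of_dvd _ (by norm_num)]; exact hModd i
    obtain ⟨bv, hbv2, hbr⟩ : ∃ bv, bv < 2 ∧ M i₀ % 4 = 1 + 2*bv :=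
      ⟨(M i₀ % 4 - 1)/2, by
        have h1 := hM4 i₀
        have h2 := Nat.mod_lt (M i₀) (show 0 < 4 by norm_num)
        omega⟩
    have hgex : ∀ i, ∃ gv, gv < 2 ∧
        (cond (e i) (M i % 4 = 1 + 2*gv) (M i = 1 + 2*bv + 4*gv)) := by
      intro i
      cases hei : e i
      · have hiF : i ∈ F := (heF i).mpr hei
        have hc := hcong i hiF i₀ hi₀
        have h8 := hMlt i
        have h1 := hModd i
        refine ⟨(M i)/4, by omega, ?_⟩
        simp only [Bool.cond_false]
        omega
      · have h1 := hM4 i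
        have h2 := Nat.mod_lt (M i) (show 0 < 4 by norm_num)
        refine ⟨(M i % 4 - 1)/2, by omega, ?_⟩
        simp only [Bool.cond_true]
        omega
    choose g hg2 hgs using hgex
    have hcond : ∀ bb : Bool, (if bb = false then 1 else 0) = cond bb 0 1 := by decide
    have h3' : 3 ≤ (cond (e 0) 0 1) + (cond (e 1) 0 1) + (cond (e 2) 0 1)
        + (cond (e 3) 0 1) + (cond (e 4) 0 1) := by
      rw [hF, Finset.card_filter, Fin.sum_univ_five] at h3
      simpa only [hcond] using h3
    obtain ⟨x₀, x₁, x₂, x₃, x₄, hsum8, hodd⟩ :=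
      claimB ⟨bv, hbv2⟩ (e 0) (e 1) (e 2) (e 3) (e 4)
        ⟨g 0, hg2 0⟩ ⟨g 1, hg2 1⟩ ⟨g 2, hg2 2⟩ ⟨g 3, hg2 3⟩ ⟨g 4, hg2 4⟩ h3'
    set x : Fin 5 → ℕ := ![x₀.val, x₁.val, x₂.val, x₃.val, x₄.val] with hx
    set X : Fin 5 → ℤ_[2] := fun j => ((x j : ℕ) : ℤ_[2]) with hX
    set d : Fin 5 → ℕ := fun i => cond (e i) (2 * M i) (M i) with hd
    -- the ℕ-sum is divisible by 8
    have hterm : ∀ i, (d i) % 8 = (cond (e i) (2*(1+2*(g i))) (1+2*bv+4*(g i))) % 8 := by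
      intro i
      have h1 := hgs i
      cases hei : e i
      · simp only [hd, hei, Bool.cond_false, Bool.cond_true] at h1 ⊢
        omega
      · simp only [hd, hei, Bool.cond_false, Bool.cond_true] at h1 ⊢
        omega
    have hN : (∑ j, d j * x j ^ 2) % 8 = 0 := by
      rw [Fin.sum_univ_five]
      have hmc : ∀ (a b c : ℕ), a % 8 = b % 8 → (a * c) % 8 = (b * c) % 8 := by
        intro a b c h
        exact Nat.ModEq.mul_right c h
      have e0 := hmc _ _ ((x 0)^2) (hterm 0)
      have e1 := hmc _ _ ((x 1)^2) (hterm 1)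
      have e2 := hmc _ _ ((x 2)^2) (hterm 2)
      have e3 := hmc _ _ ((x 3)^2) (hterm 3)
      have e4 := hmc _ _ ((x 4)^2) (hterm 4)
      have hadd : ∀ (a b a' b' : ℕ), a % 8 = a' % 8 → b % 8 = b' % 8 → (a+b) % 8 = (a'+b') % 8 :=
        fun a b a' b' h1 h2 => Nat.ModEq.add h1 h2
      have htot := hadd _ _ _ _ (hadd _ _ _ _ (hadd _ _ _ _ (hadd _ _ _ _ e0 e1) e2) e3) e4
      rw [htot]
      have hxv : x 0 = x₀.val ∧ x 1 = x₁.val ∧ x 2 = x₂.val ∧ x 3 = x₃.val ∧ x 4 = x₄.val := by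
        refine ⟨rfl, rfl, rfl, rfl, rfl⟩
      obtain ⟨hv0, hv1, hv2, hv3, hv4⟩ := hxv
      rw [hv0, hv1, hv2, hv3, hv4]
      exact hsum8
    have h8S : (8:ℤ_[2]) ∣ ∑ j, W j * X j ^ 2 := by
      have hWd : ∀ i, (8:ℤ_[2]) ∣ (W i - ((d i : ℕ) : ℤ_[2])) := by
        intro i
        cases hei : e i
        · have : W i = u i := by rw [hW]; simp [hei]
          rw [this, hd]
          simpa [hei] using hMdvd i
        · have h1 : W i = u i * 2 := by rw [hW]; simp [hei]
          have h2 : ((d i : ℕ) : ℤ_[2]) = ((M i : ℕ) : ℤ_[2]) * 2 := by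
            rw [hd]; simp [hei]; ring
          rw [h1, h2]
          have : u i * 2 - ((M i : ℕ) : ℤ_[2]) * 2 = (u i - ((M i : ℕ) : ℤ_[2])) * 2 := by ring
          rw [this]
          exact dvd_mul_of_dvd_left (hMdvd i) 2
      have hsplit : ∑ j, W j * X j ^ 2
          = ∑ j, (W j - ((d j : ℕ) : ℤ_[2])) * X j ^ 2 + ((∑ j, d j * x j ^ 2 : ℕ) : ℤ_[2]) := by
        push_cast
        rw [← Finset.sum_add_distrib]
        refine Finset.sum_congr rfl fun j _ => ?_
        rw [hX]
        push_cast
        ring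
      rw [hsplit]
      refine dvd_add (Finset.dvd_sum fun j _ => dvd_mul_of_dvd_left (hWd j) _) ?_
      obtain ⟨q, hq⟩ := Nat.dvd_of_mod_eq_zero hN
      exact ⟨(q : ℤ_[2]), by rw [hq]; push_cast; ring⟩
    have hWnorm : ∀ i, e i = false → ‖W i‖ = 1 := by
      intro i hei; rw [hW]; simp [hei, norm_mul, hu i]
    have hXnorm : ∀ (i : Fin 5), x i = 1 → ‖X i‖ = 1 := by
      intro i hxi
      simp only [hX]
      rw [hxi]
      norm_num
    rcases hodd with ⟨he', hx'⟩ | ⟨he', hx'⟩ | ⟨he', hx'⟩ | ⟨he', hx'⟩ | ⟨he', hx'⟩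
    · exact hensel2 W X 0 (hWnorm 0 he') (hXnorm 0 (by simp [hx, hx'])) h8S
    · exact hensel2 W X 1 (hWnorm 1 he') (hXnorm 1 (by simp [hx, hx'])) h8S
    · exact hensel2 W X 2 (hWnorm 2 he') (hXnorm 2 (by simp [hx, hx'])) h8S
    · exact hensel2 W X 3 (hWnorm 3 he') (hXnorm 3 (by simp [hx, hx'])) h8S
    · exact hensel2 W X 4 (hWnorm 4 he') (hXnorm 4 (by simp [hx, hx'])) h8S
  · -- some two unit positions differ mod 4 : ternary case
    push_neg at hcong
    obtain ⟨i, hiF, j, hjF, hMne⟩ := hcong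
    have hij : i ≠ j := fun h => hMne (by rw [h])
    have hcard2 : ({i, j} : Finset (Fin 5)).card ≤ 2 :=
      (Finset.card_insert_le _ _).trans (by simp)
    have hcards : (F \ {i, j}).card + ({i, j} : Finset (Fin 5)).card = (F ∪ {i, j}).card :=
      Finset.card_sdiff_add_card F {i, j}
    have hcardu : F.card ≤ (F ∪ {i, j}).card := Finset.card_le_card Finset.subset_union_left
    obtain ⟨k, hk⟩ := Finset.card_pos.mp (show 0 < (F \ {i, j}).card by omega)
    obtain ⟨hkF, hknotin⟩ := Finset.mem_sdiff.mp hk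
    have hki : k ≠ i := fun h => hknotin (by simp [h])
    have hkj : k ≠ j := fun h => hknotin (by simp [h])
    have hei : e i = false := (heF i).mp hiF
    have hej : e j = false := (heF j).mp hjF
    have hek : e k = false := (heF k).mp hkF
    obtain ⟨t, ht0, hts⟩ := tern2 (u i) (u j) (u k) (hu i) (hu j) (hu k)
      (fun hcc => hMne hcc.1)
    refine embed ![i, j, k] ?_ W t ht0 ?_
    · intro a b hab
      fin_cases a <;> fin_cases b <;> simp_all
    · rw [Fin.sum_univ_three] at hts ⊢
      simp only [Matrix.cons_val_zero, Matrix.cons_val_one, Matrix.head_cons,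
        Matrix.cons_val_two, Matrix.tail_cons] at hts ⊢
      rw [hW]
      simp only [hei, hej, hek, cond, pow_zero, mul_one]
      linear_combination hts


lemma coreOdd (hp : p ≠ 2) (u : Fin 5 → ℤ_[p]) (hu : ∀ i, ‖u i‖ = 1) (e : Fin 5 → Bool)
    (h3 : 3 ≤ (Finset.univ.filter fun i => e i = false).card) :
    ∃ v : Fin 5 → ℤ_[p], v ≠ 0 ∧ ∑ i, u i * ((p:ℕ):ℤ_[p]) ^ (cond (e i) 1 0) * v i ^ 2 = 0 := by
  obtain ⟨T, hTsub, hT3⟩ := Finset.exists_subset_card_eq h3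
  obtain ⟨i, j, k, hij, hik, hjk, hT⟩ := Finset.card_eq_three.mp hT3
  have hiF : i ∈ Finset.univ.filter (fun i => e i = false) := hTsub (by rw [hT]; simp)
  have hjF : j ∈ Finset.univ.filter (fun i => e i = false) := hTsub (by rw [hT]; simp)
  have hkF : k ∈ Finset.univ.filter (fun i => e i = false) := hTsub (by rw [hT]; simp)
  have hei : e i = false := (Finset.mem_filter.mp hiF).2
  have hej : e j = false := (Finset.mem_filter.mp hjF).2
  have hek : e k = false := (Finset.mem_filter.mp hkF).2
  obtain ⟨t, ht0, hts⟩ := tern_odd hp (u i) (u j) (u k) (hu i) (hu j) (hu k)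
  refine embed ![i, j, k] ?_ (fun m => u m * ((p:ℕ):ℤ_[p]) ^ (cond (e m) 1 0)) t ht0 ?_
  · intro a b hab
    fin_cases a <;> fin_cases b <;> simp_all
  · rw [Fin.sum_univ_three] at hts ⊢
    simp only [Matrix.cons_val_zero, Matrix.cons_val_one, Matrix.head_cons,
      Matrix.cons_val_two, Matrix.tail_cons] at hts ⊢
    simp only [hei, hej, hek, Bool.cond_false, pow_zero, mul_one]
    linear_combination hts

lemma coreAll (u : Fin 5 → ℤ_[p]) (hu : ∀ i, ‖u i‖ = 1) (e : Fin 5 → Bool) :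
    ∃ v : Fin 5 → ℤ_[p], v ≠ 0 ∧ ∑ i, u i * ((p:ℕ):ℤ_[p]) ^ (cond (e i) 1 0) * v i ^ 2 = 0 := by
  classical
  have key : ∀ (e' : Fin 5 → Bool), 3 ≤ (Finset.univ.filter fun i => e' i = false).card →
      ∃ v : Fin 5 → ℤ_[p], v ≠ 0 ∧ ∑ i, u i * ((p:ℕ):ℤ_[p]) ^ (cond (e' i) 1 0) * v i ^ 2 = 0 := by
    intro e' h3
    by_cases hp2 : p = 2
    · subst hp2
      rw [show (((2:ℕ)):ℤ_[2]) = (2:ℤ_[2]) from by norm_cast]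
      exact core2 u hu e' h3
    · exact coreOdd hp2 u hu e' h3
  have hPne : ((p:ℕ):ℤ_[p]) ≠ 0 :=
    Nat.cast_ne_zero.mpr (Fact.out : p.Prime).ne_zero
  by_cases h3 : 3 ≤ (Finset.univ.filter fun i => e i = false).card
  · exact key e h3
  · have hsplit := Finset.card_filter_add_card_filter_not
      (s := Finset.univ) (p := fun i : Fin 5 => e i = false)
    have hcongr : (Finset.univ.filter fun i : Fin 5 => (!(e i)) = false)
        = (Finset.univ.filter fun i : Fin 5 => ¬(e i = false)) := by
      apply Finset.filter_congr
      intro i _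
      cases e i <;> simp
    have huniv : (Finset.univ : Finset (Fin 5)).card = 5 := by simp
    have h3' : 3 ≤ (Finset.univ.filter fun i => (!(e i)) = false).card := by
      rw [hcongr]; omega
    obtain ⟨v', hv0, hvs⟩ := key (fun i => !(e i)) h3'
    refine ⟨fun i => ((p:ℕ):ℤ_[p]) ^ (cond (e i) 0 1) * v' i, ?_, ?_⟩
    · intro h0
      apply hv0
      funext i
      have := congrFun h0 i
      rcases mul_eq_zero.mp this with h | h
      · exact absurd h (pow_ne_zero _ hPne)
      · exact h
    · have hterm : ∀ i, u i * ((p:ℕ):ℤ_[p]) ^ (cond (e i) 1 0)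
          * (((p:ℕ):ℤ_[p]) ^ (cond (e i) 0 1) * v' i) ^ 2
          = ((p:ℕ):ℤ_[p]) * (u i * ((p:ℕ):ℤ_[p]) ^ (cond (!(e i)) 1 0) * v' i ^ 2) := by
        intro i
        cases e i <;> simp <;> ring
      rw [Finset.sum_congr rfl (fun i _ => hterm i), ← Finset.mul_sum, hvs, mul_zero]

lemma normalize (c : ℚ_[p]) (hc : c ≠ 0) :
    ∃ (U : ℤ_[p]) (e : Bool) (s : ℚ_[p]), s ≠ 0 ∧ ‖U‖ = 1 ∧
      c = (U : ℚ_[p]) * ((p:ℕ):ℚ_[p]) ^ (cond e 1 0) * s ^ 2 := by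
  have hpR : ((p:ℕ):ℝ) ≠ 0 := Nat.cast_ne_zero.mpr (Fact.out : p.Prime).ne_zero
  have hP : ((p:ℕ):ℚ_[p]) ≠ 0 := Nat.cast_ne_zero.mpr (Fact.out : p.Prime).ne_zero
  obtain ⟨e, k, hm⟩ : ∃ (e : Bool) (k : ℤ), c.valuation = 2*k + (cond e 1 0 : ℕ) := by
    rcases Int.even_or_odd c.valuation with ⟨k, hk⟩ | ⟨k, hk⟩
    · exact ⟨false, k, by simpa using by omega⟩
    · exact ⟨true, k, by simpa using by omega⟩
  set P : ℚ_[p] := ((p:ℕ):ℚ_[p]) with hPdef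
  set uu : ℚ_[p] := c * P ^ (-c.valuation) with huu
  have hu1 : ‖uu‖ = 1 := by
    rw [huu, norm_mul, Padic.norm_eq_zpow_neg_valuation hc, hPdef, Padic.norm_p_zpow, neg_neg,
      ← zpow_add₀ hpR]
    simp
  refine ⟨⟨uu, hu1.le⟩, e, P ^ k, zpow_ne_zero _ hP, by exact hu1, ?_⟩
  show c = uu * P ^ (cond e 1 0) * (P ^ k) ^ 2
  have hc1 : c = uu * P ^ (c.valuation) := by
    rw [huu, mul_assoc, ← zpow_add₀ hP]
    simp
  rw [hc1, hm]
  rw [show 2*k + ((cond e 1 0 : ℕ):ℤ) = ((cond e 1 0 : ℕ):ℤ) + k + k from by ring,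
    zpow_add₀ hP, zpow_add₀ hP, zpow_natCast]
  ring

lemma five (w : Fin 5 → ℚ_[p]) (hw : ∀ i, w i ≠ 0) :
    ∃ v : Fin 5 → ℚ_[p], v ≠ 0 ∧ ∑ i, w i * v i ^ 2 = 0 := by
  choose U e s hs hU hrep using fun i => normalize (w i) (hw i)
  obtain ⟨t, ht0, hts⟩ := coreAll U hU e
  refine ⟨fun i => (s i)⁻¹ * ((t i : ℚ_[p])), ?_, ?_⟩
  · obtain ⟨i, hti⟩ := Function.ne_iff.mp ht0
    intro h0
    apply hti
    have h1 : (s i)⁻¹ * ((t i : ℚ_[p])) = 0 := by simpa using congrFun h0 i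
    rcases mul_eq_zero.mp h1 with h | h
    · exact absurd h (inv_ne_zero (hs i))
    · have h2 : t i = 0 := PadicInt.coe_eq_zero.mp h
      simpa using h2
  · have hcast : ((∑ i, U i * ((p:ℕ):ℤ_[p]) ^ (cond (e i) 1 0) * t i ^ 2 : ℤ_[p]) : ℚ_[p]) = 0 := by
      rw [hts]; exact_mod_cast rfl
    push_cast at hcast
    calc ∑ i, w i * ((s i)⁻¹ * (t i : ℚ_[p])) ^ 2
        = ∑ i, (U i : ℚ_[p]) * ((p:ℕ):ℚ_[p]) ^ (cond (e i) 1 0) * (t i : ℚ_[p]) ^ 2 := by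
          refine Finset.sum_congr rfl fun i _ => ?_
          rw [hrep i]
          field_simp [hs i]
      _ = 0 := hcast

lemma main (m : ℕ) (hm : 5 ≤ m) (w : Fin m → ℚ_[p]) :
    ∃ v : Fin m → ℚ_[p], v ≠ 0 ∧ ∑ i, w i * v i ^ 2 = 0 := by
  by_cases hz : ∃ i, w i = 0
  · obtain ⟨i, hi⟩ := hz
    refine ⟨Pi.single i 1, ?_, ?_⟩
    · intro h
      have := congrFun h i
      rw [Pi.single_eq_same] at this
      exact one_ne_zero this
    · rw [Finset.sum_eq_single i]
      · rw [Pi.single_eq_same, hi]; ring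
      · intro j _ hj
        rw [Pi.single_eq_of_ne hj]; ring
      · intro h
        exact absurd (Finset.mem_univ i) h
  · push_neg at hz
    obtain ⟨t, ht0, hts⟩ := five (fun j : Fin 5 => w (Fin.castLE hm j)) (fun j => hz _)
    exact embed (Fin.castLE hm) (Fin.castLE_injective hm) w t ht0 hts

end Stmt16Aux

/-- Over `ℚ_p`, every nondegenerate quadratic form in `n ≥ 5` variables is isotropic;
in particular, for positive integers `a₁,…,aₙ` with `n ≥ 5`, the form `∑ aᵢxᵢ²` has a
nontrivial zero in `ℚ_pⁿ`. -/
theorem stmt_16 (p : ℕ) [Fact p.Prime] (n : ℕ) (hn : 5 ≤ n) :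
    (∀ Q : QuadraticForm ℚ_[p] (Fin n → ℚ_[p]),
      (QuadraticMap.polarBilin Q).Nondegenerate → ¬ Q.Anisotropic) ∧
    (∀ a : Fin n → ℤ, (∀ i, 0 < a i) →
      ∃ v : Fin n → ℚ_[p], v ≠ 0 ∧ ∑ i, (a i : ℚ_[p]) * (v i) ^ 2 = 0) := by
  constructor
  · intro Q _ hani
    letI : Invertible (2 : ℚ_[p]) := invertibleOfNonzero two_ne_zero
    obtain ⟨wgt, ⟨iso⟩⟩ := QuadraticForm.equivalent_weightedSumSquares Q
    have hd : 5 ≤ Module.finrank ℚ_[p] (Fin n → ℚ_[p]) := by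
      rw [Module.finrank_fin_fun]; exact hn
    obtain ⟨v, hv0, hvs⟩ := Stmt16Aux.main _ hd wgt
    have hQv : Q (iso.symm v) = 0 := by
      rw [iso.symm.map_app, QuadraticMap.weightedSumSquares_apply]
      simp only [smul_eq_mul, ← pow_two]
      exact hvs
    have hz := hani _ hQv
    apply hv0
    exact (LinearEquiv.map_eq_zero_iff iso.symm.toLinearEquiv).mp hz
  · intro a _
    exact Stmt16Aux.main n hn (fun i => (a i : ℚ_[p]))
end

section
/- Let p be an odd prime, u ∈ ℤ_p^×, and r ≥ 1. Then (ℤ_p^× + u/p^r)^2 = (p^r ℤ_p^× + u^2)/p^{2r} and (ℤ_p + u/p^r)^2 = (p^r ℤ_p + u^2)/p^{2r} as subsets of ℚ_p. -/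
section aux
variable {p : ℕ} [Fact p.Prime]

lemma two_unit_norm (hp : p ≠ 2) : ‖(2 : ℤ_[p])‖ = 1 := by
  have h2 : ¬ ((p : ℤ) ∣ 2) := by
    intro h
    exact hp ((Nat.prime_dvd_prime_iff_eq (Fact.out : p.Prime) Nat.prime_two).mp
      (by exact_mod_cast h))
  have hlt := (PadicInt.norm_int_lt_one_iff_dvd (p := p) 2).not.mpr h2
  have hle : ‖((2:ℤ) : ℤ_[p])‖ ≤ 1 := PadicInt.norm_le_one _
  have : ‖((2:ℤ) : ℤ_[p])‖ = 1 := le_antisymm hle (not_lt.mp hlt)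
  exact_mod_cast this

lemma norm_p_pow_lt_one (r : ℕ) (hr : 1 ≤ r) : ‖((p:ℤ_[p]))^r‖ < 1 := by
  rw [norm_pow]
  apply pow_lt_one₀ (norm_nonneg _) _ (by omega)
  rw [PadicInt.norm_p, inv_lt_one_iff₀]
  right
  exact_mod_cast (Fact.out : p.Prime).one_lt

lemma aux_unit (hp : p ≠ 2) (u v : ℤ_[p]) (hu : IsUnit u) (r : ℕ) (hr : 1 ≤ r) :
    IsUnit ((p:ℤ_[p])^r * v + 2 * u) := by
  rw [PadicInt.isUnit_iff]
  have h2u : ‖2 * u‖ = 1 := by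
    rw [norm_mul, two_unit_norm hp, one_mul, PadicInt.isUnit_iff.mp hu]
  have hpv : ‖(p:ℤ_[p])^r * v‖ < 1 := by
    calc ‖(p:ℤ_[p])^r * v‖ ≤ ‖(p:ℤ_[p])^r‖ * 1 := by
          rw [norm_mul]; gcongr; exact PadicInt.norm_le_one _
      _ < 1 := by rw [mul_one]; exact norm_p_pow_lt_one r hr
  rw [PadicInt.norm_add_eq_max_of_ne (by rw [h2u]; exact ne_of_lt hpv), h2u]
  exact max_eq_right hpv.le

lemma solve_quadratic (hp : p ≠ 2) (u : ℤ_[p]) (hu : IsUnit u) (r : ℕ) (hr : 1 ≤ r)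
    (w : ℤ_[p]) : ∃ v : ℤ_[p], (p:ℤ_[p])^r * v^2 + 2*u*v = w ∧ (IsUnit w → IsUnit v) := by
  obtain ⟨U, hU⟩ := hu
  set t : ℤ_[p] := (↑U⁻¹ : ℤ_[p]) with ht
  have hut : u * t = 1 := by rw [← hU, ht]; exact_mod_cast U.mul_inv
  set F : Polynomial ℤ_[p] :=
    Polynomial.X^2 - Polynomial.C (1 + (p:ℤ_[p])^r * w * t^2) with hF
  have hev : F.eval 1 = -((p:ℤ_[p])^r * w * t^2) := by simp [hF]
  have hder1 : F.derivative.eval 1 = 2 := by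
    rw [hF, Polynomial.derivative_sub, Polynomial.derivative_C, Polynomial.derivative_X_pow]
    simp
  have hnorm : ‖F.eval 1‖ < ‖F.derivative.eval 1‖ ^ 2 := by
    rw [hev, hder1, two_unit_norm hp, norm_neg, one_pow]
    calc ‖(p:ℤ_[p])^r * w * t^2‖ ≤ ‖(p:ℤ_[p])^r‖ * 1 := by
          rw [norm_mul, norm_mul]
          calc ‖(p:ℤ_[p])^r‖ * ‖w‖ * ‖t^2‖ ≤ ‖(p:ℤ_[p])^r‖ * 1 * 1 := by
                gcongr <;> exact PadicInt.norm_le_one _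
            _ = ‖(p:ℤ_[p])^r‖ * 1 := by ring
      _ < 1 := by rw [mul_one]; exact norm_p_pow_lt_one r hr
  obtain ⟨z, hz0, hzdist, -, -⟩ := hensels_lemma hnorm
  have hz2 : z^2 = 1 + (p:ℤ_[p])^r * w * t^2 := by
    have : z^2 - (1 + (p:ℤ_[p])^r * w * t^2) = 0 := by simpa [hF] using hz0
    exact sub_eq_zero.mp this
  have hzd : ‖z - 1‖ < 1 := by rwa [Polynomial.coe_aeval_eq_eval, hder1, two_unit_norm hp] at hzdist
  have hZunit : IsUnit (z + 1) := by
    rw [PadicInt.isUnit_iff]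
    have h21 : ‖(2:ℤ_[p])‖ = 1 := two_unit_norm hp
    have : z + 1 = (z - 1) + 2 := by ring
    rw [this, PadicInt.norm_add_eq_max_of_ne (by rw [h21]; exact ne_of_lt hzd), h21]
    exact max_eq_right hzd.le
  obtain ⟨Z, hZ⟩ := hZunit
  set i : ℤ_[p] := (↑Z⁻¹ : ℤ_[p]) with hi'
  have hi : (z + 1) * i = 1 := by rw [← hZ, hi']; exact_mod_cast Z.mul_inv
  refine ⟨u * w * t^2 * i, ?_, ?_⟩
  · have hpv : (p:ℤ_[p])^r * (u * w * t^2 * i) = u * (z - 1) := by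
      linear_combination (-(u*i)) * hz2 + (u*(z-1)) * hi
    linear_combination (u * w * t^2 * i) * hpv + (u^2*t^2*w) * hi + (w*(u*t+1)) * hut
  · intro hw
    exact IsUnit.mul (IsUnit.mul (IsUnit.mul (hU ▸ U.isUnit) hw) ((U⁻¹).isUnit.pow 2))
      (Z⁻¹).isUnit

lemma cast_sq (u : ℤ_[p]) (r : ℕ) (v w : ℤ_[p]) (h : (p:ℤ_[p])^r * v^2 + 2*u*v = w) :
    ((v : ℚ_[p]) + (u : ℚ_[p]) / (p : ℚ_[p]) ^ r) ^ 2
      = ((p : ℚ_[p]) ^ r * (w : ℚ_[p]) + (u : ℚ_[p]) ^ 2) / (p : ℚ_[p]) ^ (2 * r) := by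
  have hp0 : ((p:ℚ_[p]))^r ≠ 0 := by
    apply pow_ne_zero
    exact_mod_cast Nat.cast_ne_zero.mpr (Fact.out : p.Prime).ne_zero
  have hc : (p:ℚ_[p])^r * (v:ℚ_[p])^2 + 2*(u:ℚ_[p])*(v:ℚ_[p]) = (w:ℚ_[p]) := by
    exact_mod_cast congrArg (fun x : ℤ_[p] => (x : ℚ_[p])) h
  have hnum : ((v:ℚ_[p]) * (p:ℚ_[p])^r + (u:ℚ_[p]))^2
      = (p:ℚ_[p])^r * (w:ℚ_[p]) + (u:ℚ_[p])^2 := by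
    linear_combination ((p:ℚ_[p])^r) * hc
  have hsplit : (v:ℚ_[p]) + (u:ℚ_[p])/(p:ℚ_[p])^r
      = ((v:ℚ_[p])*(p:ℚ_[p])^r + (u:ℚ_[p]))/(p:ℚ_[p])^r := by field_simp
  rw [hsplit, div_pow, hnum, pow_mul']

end aux

/-- For `p` an odd prime, `u ∈ ℤ_p^×`, and `r ≥ 1`, as subsets of `ℚ_p`:
`(ℤ_p^× + u/p^r)² = (p^r ℤ_p^× + u²)/p^{2r}` and `(ℤ_p + u/p^r)² = (p^r ℤ_p + u²)/p^{2r}`. -/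
theorem stmt_17 (p : ℕ) [Fact p.Prime] (hp : p ≠ 2) (u : ℤ_[p]) (hu : IsUnit u)
    (r : ℕ) (hr : 1 ≤ r) :
    ({z : ℚ_[p] | ∃ v : ℤ_[p], IsUnit v ∧ z = ((v : ℚ_[p]) + (u : ℚ_[p]) / (p : ℚ_[p]) ^ r) ^ 2}
        = {z : ℚ_[p] | ∃ w : ℤ_[p], IsUnit w ∧
            z = ((p : ℚ_[p]) ^ r * (w : ℚ_[p]) + (u : ℚ_[p]) ^ 2) / (p : ℚ_[p]) ^ (2 * r)}) ∧
    ({z : ℚ_[p] | ∃ v : ℤ_[p], z = ((v : ℚ_[p]) + (u : ℚ_[p]) / (p : ℚ_[p]) ^ r) ^ 2}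
        = {z : ℚ_[p] | ∃ w : ℤ_[p],
            z = ((p : ℚ_[p]) ^ r * (w : ℚ_[p]) + (u : ℚ_[p]) ^ 2) / (p : ℚ_[p]) ^ (2 * r)}) := by
  constructor
  · ext z
    simp only [Set.mem_setOf_eq]
    constructor
    · rintro ⟨v, hv, rfl⟩
      refine ⟨(p:ℤ_[p])^r * v^2 + 2*u*v, ?_, (cast_sq u r v _ rfl).symm ▸ cast_sq u r v _ rfl⟩
      have : (p:ℤ_[p])^r * v^2 + 2*u*v = v * ((p:ℤ_[p])^r * v + 2*u) := by ring
      rw [this]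
      exact hv.mul (aux_unit hp u v hu r hr)
    · rintro ⟨w, hw, rfl⟩
      obtain ⟨v, hveq, hvu⟩ := solve_quadratic hp u hu r hr w
      exact ⟨v, hvu hw, (cast_sq u r v w hveq).symm⟩
  · ext z
    simp only [Set.mem_setOf_eq]
    constructor
    · rintro ⟨v, rfl⟩
      exact ⟨(p:ℤ_[p])^r * v^2 + 2*u*v, cast_sq u r v _ rfl⟩
    · rintro ⟨w, rfl⟩
      obtain ⟨v, hveq, -⟩ := solve_quadratic hp u hu r hr w
      exact ⟨v, (cast_sq u r v w hveq).symm⟩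
end

section
/- Let u ∈ ℤ_2^× and r ≥ 2 an integer. Then (ℤ_2 + u/2^r)^2 = ℤ_2/2^{r-1} + (u/2^r)^2 as subsets of ℚ_2; and for r = 1, (ℤ_2 + u/2)^2 = 2ℤ_2 + (u/2)^2. -/
open Polynomial

lemma two_dvd_iff_toZMod (x : ℤ_[2]) : (2 : ℤ_[2]) ∣ x ↔ PadicInt.toZMod x = 0 := by
  rw [← RingHom.mem_ker, PadicInt.ker_toZMod, PadicInt.maximalIdeal_eq_span_p,
    Ideal.mem_span_singleton]
  norm_num


lemma zmod2_unit_eq_one (x : ZMod 2) (h : IsUnit x) : x = 1 := by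
  have := h.ne_zero
  revert this; revert x; decide

lemma alg_id (s : ℕ) (v u w : ℚ_[2]) (hw : w = 2 ^ (s + 1) * v ^ 2 + u * v) :
    (v + u / 2 ^ (s + 2)) ^ 2 = w / 2 ^ (s + 1) + (u / 2 ^ (s + 2)) ^ 2 := by
  subst hw
  field_simp
  ring

lemma solve_quad (c u b a0 : ℤ_[2]) (hu : IsUnit u)
    (h : ‖c * a0 ^ 2 + u * a0 - b‖ < 1) :
    ∃ v : ℤ_[2], c * v ^ 2 + u * v = b := by
  set F : Polynomial ℤ_[2] := C c * X ^ 2 + C u * X - C b with hF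
  have hFe : ∀ x : ℤ_[2], F.eval x = c * x ^ 2 + u * x - b := by
    intro x; simp [hF]
  have hFd : ∀ x : ℤ_[2], F.derivative.eval x = 2 * c * x + u := by
    intro x
    simp [hF]
    ring
  have h2 : ((2 : ℕ) : ℤ_[2]) = 2 := by norm_num
  have hunit : IsUnit (2 * c * a0 + u) := by
    rw [PadicInt.isUnit_iff] at hu ⊢
    rcases lt_or_eq_of_le (PadicInt.norm_le_one (2 * c * a0 + u)) with h' | h'
    · exfalso
      rw [PadicInt.norm_lt_one_iff_dvd, h2] at h'
      have hd : (2 : ℤ_[2]) ∣ 2 * c * a0 := ⟨c * a0, by ring⟩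
      have : (2 : ℤ_[2]) ∣ u := (dvd_add_right hd).mp h'
      rw [← h2, ← PadicInt.norm_lt_one_iff_dvd, hu] at this
      norm_num at this
    · exact h'
  have hdnorm : ‖F.derivative.eval a0‖ = 1 := by
    rw [hFd, ← PadicInt.isUnit_iff]
    exact hunit
  have hnorm : ‖F.eval a0‖ < ‖F.derivative.eval a0‖ ^ 2 := by
    rw [hFe, hdnorm]
    simpa using h
  obtain ⟨z, hz, -⟩ := hensels_lemma (p := 2) (F := F) (a := a0) hnorm
  refine ⟨z, ?_⟩
  rw [Polynomial.coe_aeval_eq_eval, hFe] at hz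
  linear_combination hz

/-- For `u ∈ ℤ_2^×`: if `r ≥ 2` then, as subsets of `ℚ_2`,
`(ℤ_2 + u/2^r)² = ℤ_2/2^{r-1} + (u/2^r)²`; and for `r = 1`,
`(ℤ_2 + u/2)² = 2ℤ_2 + (u/2)²`. -/
theorem stmt_18 (u : ℤ_[2]) (hu : IsUnit u) :
    (∀ r : ℕ, 2 ≤ r →
      {z : ℚ_[2] | ∃ v : ℤ_[2], z = ((v : ℚ_[2]) + (u : ℚ_[2]) / 2 ^ r) ^ 2}
        = {z : ℚ_[2] | ∃ w : ℤ_[2],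
            z = (w : ℚ_[2]) / 2 ^ (r - 1) + ((u : ℚ_[2]) / 2 ^ r) ^ 2}) ∧
    ({z : ℚ_[2] | ∃ v : ℤ_[2], z = ((v : ℚ_[2]) + (u : ℚ_[2]) / 2) ^ 2}
        = {z : ℚ_[2] | ∃ w : ℤ_[2], z = 2 * (w : ℚ_[2]) + ((u : ℚ_[2]) / 2) ^ 2}) := by
  have h2 : ((2 : ℕ) : ℤ_[2]) = 2 := by norm_num
  have h2Q : (((2 : ℤ_[2]) : ℚ_[2])) = 2 := by norm_cast
  have hnorm2 : ∀ x : ℤ_[2], ‖(2 : ℤ_[2]) * x‖ ≤ 2⁻¹ := by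
    intro x
    calc ‖(2 : ℤ_[2]) * x‖ ≤ ‖(2 : ℤ_[2])‖ * ‖x‖ := norm_mul_le _ _
      _ ≤ ‖(2 : ℤ_[2])‖ * 1 :=
          mul_le_mul_of_nonneg_left (PadicInt.norm_le_one _) (norm_nonneg _)
      _ = 2⁻¹ := by rw [mul_one, ← h2, PadicInt.norm_p]; norm_num
  constructor
  · intro r hr
    obtain ⟨s, rfl⟩ : ∃ s, r = s + 2 := ⟨r - 2, by omega⟩
    have hsub : s + 2 - 1 = s + 1 := by omega
    ext z
    simp only [Set.mem_setOf_eq, hsub]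
    constructor
    · rintro ⟨v, rfl⟩
      refine ⟨2 ^ (s + 1) * v ^ 2 + u * v, ?_⟩
      exact alg_id s v u _ (by push_cast [h2Q]; try ring)
    · rintro ⟨w, rfl⟩
      have hsmall : ‖(2 : ℤ_[2]) ^ (s + 1) * ((↑hu.unit⁻¹ : ℤ_[2]) * w) ^ 2
          + u * ((↑hu.unit⁻¹ : ℤ_[2]) * w) - w‖ < 1 := by
        have huu : u * ((↑hu.unit⁻¹ : ℤ_[2]) * w) = w := by
          rw [← mul_assoc, hu.mul_val_inv, one_mul]
        rw [huu, add_sub_cancel_right]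
        have heq : (2 : ℤ_[2]) ^ (s + 1) * ((↑hu.unit⁻¹ : ℤ_[2]) * w) ^ 2
            = 2 * (2 ^ s * ((↑hu.unit⁻¹ : ℤ_[2]) * w) ^ 2) := by ring
        rw [heq]
        calc ‖(2 : ℤ_[2]) * (2 ^ s * ((↑hu.unit⁻¹ : ℤ_[2]) * w) ^ 2)‖ ≤ 2⁻¹ := hnorm2 _
          _ < 1 := by norm_num
      obtain ⟨v, hv⟩ := solve_quad (2 ^ (s + 1)) u w ((↑hu.unit⁻¹ : ℤ_[2]) * w) hu hsmall
      exact ⟨v, (alg_id s v u _ (by rw [← hv]; push_cast [h2Q]; try ring)).symm⟩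
  · ext z
    simp only [Set.mem_setOf_eq]
    constructor
    · rintro ⟨v, rfl⟩
      have hdvd : (2 : ℤ_[2]) ∣ v ^ 2 + u * v := by
        rw [two_dvd_iff_toZMod]
        have hu1 : PadicInt.toZMod u = 1 := zmod2_unit_eq_one _ (hu.map _)
        rw [map_add, map_pow, map_mul, hu1, one_mul]
        generalize PadicInt.toZMod v = x
        revert x; decide
      obtain ⟨w, hw⟩ := hdvd
      refine ⟨w, ?_⟩
      have hwQ : (v : ℚ_[2]) ^ 2 + (u : ℚ_[2]) * v = 2 * w := by
        have h' : ((v ^ 2 + u * v : ℤ_[2]) : ℚ_[2]) = ((2 * w : ℤ_[2]) : ℚ_[2]) := by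
          rw [hw]
        push_cast [h2Q] at h'
        exact h'
      field_simp
      linear_combination 4 * hwQ
    · rintro ⟨w, rfl⟩
      obtain ⟨v, hv⟩ := solve_quad 1 u (2 * w) 0 hu (by
        simp only [mul_zero, zero_pow, one_mul, zero_add, zero_sub, norm_neg,
          ne_eq, OfNat.ofNat_ne_zero, not_false_eq_true]
        calc ‖(2 : ℤ_[2]) * w‖ ≤ 2⁻¹ := hnorm2 _
          _ < 1 := by norm_num)
      refine ⟨v, ?_⟩
      have hvQ : (v : ℚ_[2]) ^ 2 + (u : ℚ_[2]) * v = 2 * w := by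
        have h' : ((1 * v ^ 2 + u * v : ℤ_[2]) : ℚ_[2]) = ((2 * w : ℤ_[2]) : ℚ_[2]) := by
          rw [hv]
        push_cast [h2Q] at h'
        linear_combination h'
      field_simp
      linear_combination -4 * hvQ
end
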